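/- arXiv:2507.03264 — 8 statements merged into one kernel-verified Lean document; each statement's English description precedes it below -/
import Mathlib

section
/- For any graph G, any vertex u of G, and any positive integer k, the Ramsey number satisfies r(G, K_{1,k}) ≤ r(G − u, K_{1,k}) + k, where G − u denotes G with vertex u and all incident edges removed. -/
open SimpleGraph Finset

/-- `F.ContainsCopy G` : the graph `F` contains a copy of `G` as a subgraph,
i.e. there is an injective map preserving adjacency. -/
def SimpleGraph.ContainsCopy {V W : Type*} (F : SimpleGraph V) (G : SimpleGraph W) : Prop :=
  ∃ f : W ↪ V, ∀ ⦃a b : W⦄, G.Adj a b → F.Adj (f a) (f b)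

/-- The Ramsey number `r(G,H)` : the least positive `N` such that in every red/blue
edge-colouring of `K_N` (the red graph being `R`, the blue graph `Rᶜ`) there is a
red copy of `G` or a blue copy of `H`. -/
noncomputable def ramseyNumber {V W : Type*} (G : SimpleGraph V) (H : SimpleGraph W) : ℕ :=
  sInf {N | 0 < N ∧ ∀ R : SimpleGraph (Fin N), R.ContainsCopy G ∨ Rᶜ.ContainsCopy H}

/-- The star `K_{1,k}`. -/
def starGraph (k : ℕ) : SimpleGraph (Fin 1 ⊕ Fin k) := completeBipartiteGraph (Fin 1) (Fin k)

/-- The independence number `α(G)`. -/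
noncomputable def indepNum {V : Type*} (G : SimpleGraph V) : ℕ :=
  sSup {m | ∃ s : Set V, (s.Pairwise fun a b => ¬ G.Adj a b) ∧ s.ncard = m}

/-- The vertex set of `G_v = G - N[v]` : the complement of the closed neighbourhood. -/
def SimpleGraph.delNbhd {V : Type*} (G : SimpleGraph V) (v : V) : Set V :=
  {w | w ≠ v ∧ ¬ G.Adj v w}

/-- `α'(G) = min over vertices v of α(G - N[v])`. -/
noncomputable def alphaPrime {V : Type*} (G : SimpleGraph V) : ℕ :=
  sInf {m | ∃ v : V, m = _root_.indepNum (G.induce (G.delNbhd v))}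

/-- `t` disjoint copies of the graph `G`. -/
def nCopies {V : Type*} (t : ℕ) (G : SimpleGraph V) : SimpleGraph (Fin t × V) where
  Adj a b := a.1 = b.1 ∧ G.Adj a.2 b.2
  symm := ⟨fun a b h => ⟨h.1.symm, h.2.symm⟩⟩
  loopless := ⟨fun a h => G.loopless.irrefl a.2 h.2⟩

lemma copy_comap {V W U : Type*} {R : SimpleGraph V} (e : W ↪ V) {H : SimpleGraph U}
    (h : (R.comap e).ContainsCopy H) : R.ContainsCopy H := by
  obtain ⟨f, hf⟩ := h
  exact ⟨f.trans e, fun a b hab => hf hab⟩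

lemma copy_comap_compl {V W U : Type*} {R : SimpleGraph V} (e : W ↪ V) {H : SimpleGraph U}
    (h : (R.comap e)ᶜ.ContainsCopy H) : Rᶜ.ContainsCopy H := by
  obtain ⟨f, hf⟩ := h
  refine ⟨f.trans e, fun a b hab => ?_⟩
  obtain ⟨hne, hadj⟩ := (SimpleGraph.compl_adj _ _ _).1 (hf hab)
  exact (SimpleGraph.compl_adj _ _ _).2 ⟨fun hh => hne (e.injective hh), fun hh => hadj hh⟩

lemma star_copy {M k : ℕ} {R : SimpleGraph (Fin M)} {v : Fin M} {t : Finset (Fin M)}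
    (ht : t.card = k) (hv : v ∉ t) (hblue : ∀ w ∈ t, ¬ R.Adj v w) :
    Rᶜ.ContainsCopy (_root_.starGraph k) := by
  let et : Fin k ↪ Fin M :=
    (t.orderIsoOfFin ht).toEmbedding.trans (Function.Embedding.subtype _)
  have hmem : ∀ i, et i ∈ t := fun i => (t.orderIsoOfFin ht i).2
  have hinj : Function.Injective (Sum.elim (fun _ : Fin 1 => v) et) := by
    rintro (a | a) (b | b) h <;> simp only [Sum.elim_inl, Sum.elim_inr] at h
    · simp [Subsingleton.elim a b]
    · exact absurd (h ▸ hmem b) hv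
    · exact absurd (h.symm ▸ hmem a) hv
    · exact congrArg Sum.inr (et.injective h)
  refine ⟨⟨Sum.elim (fun _ => v) et, hinj⟩, ?_⟩
  rintro (a | a) (b | b) hab <;>
    simp only [_root_.starGraph, completeBipartiteGraph_adj, Sum.isLeft, Sum.isRight] at hab <;>
    simp only [Function.Embedding.coeFn_mk, Sum.elim_inl, Sum.elim_inr] <;> try tauto
  · exact (SimpleGraph.compl_adj _ _ _).2 ⟨fun h => hv (h ▸ hmem b), hblue _ (hmem b)⟩
  · exact (SimpleGraph.compl_adj _ _ _).2 ⟨fun h => hv (h.symm ▸ hmem a),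
      fun h => hblue _ (hmem a) h.symm⟩

lemma key {V : Type*} (G : SimpleGraph V) (u : V) {k N : ℕ} (hk : 1 ≤ k)
    (hN : 0 < N ∧ ∀ R : SimpleGraph (Fin N),
        R.ContainsCopy (G.induce {w | w ≠ u}) ∨ Rᶜ.ContainsCopy (_root_.starGraph k)) :
    0 < N + k ∧ ∀ R : SimpleGraph (Fin (N + k)),
        R.ContainsCopy G ∨ Rᶜ.ContainsCopy (_root_.starGraph k) := by
  classical
  refine ⟨by omega, fun R => ?_⟩
  by_cases hstar : ∃ v : Fin (N + k), k ≤ (univ.filter fun w => w ≠ v ∧ ¬ R.Adj v w).card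
  · obtain ⟨v, hv⟩ := hstar
    obtain ⟨t, hts, htc⟩ := Finset.exists_subset_card_eq hv
    refine Or.inr (star_copy htc (fun hvt => ?_) (fun w hw => (Finset.mem_filter.1 (hts hw)).2.2))
    exact (Finset.mem_filter.1 (hts hvt)).2.1 rfl
  · push_neg at hstar
    have hdeg : ∀ v : Fin (N + k), N ≤ (univ.filter fun w => R.Adj v w).card := by
      intro v
      have h1 : (univ.filter fun w => w ≠ v ∧ ¬ R.Adj v w).card ≤ k - 1 := by
        have := hstar v; omega
      have hsub : (univ : Finset (Fin (N + k))) ⊆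
          (univ.filter fun w => R.Adj v w) ∪ (univ.filter fun w => w ≠ v ∧ ¬ R.Adj v w) ∪ {v} := by
        intro w _
        by_cases h : w = v
        · simp [h]
        · by_cases h2 : R.Adj v w <;> simp [h, h2]
      have hc := Finset.card_le_card hsub
      have h2 := Finset.card_union_le
        ((univ.filter fun w => R.Adj v w) ∪ (univ.filter fun w => w ≠ v ∧ ¬ R.Adj v w)) {v}
      have h3 := Finset.card_union_le (univ.filter fun w => R.Adj v w)
        (univ.filter fun w => w ≠ v ∧ ¬ R.Adj v w)
      simp only [Finset.card_univ, Fintype.card_fin, Finset.card_singleton] at hc h2 h3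
      omega
    have w0 : Fin (N + k) := ⟨0, by omega⟩
    obtain ⟨t, hts, htc⟩ := Finset.exists_subset_card_eq (hdeg w0)
    let e : Fin N ↪ Fin (N + k) :=
      (t.orderIsoOfFin htc).toEmbedding.trans (Function.Embedding.subtype _)
    have hmem : ∀ i, e i ∈ t := fun i => (t.orderIsoOfFin htc i).2
    have hadj : ∀ i, R.Adj w0 (e i) := fun i => (Finset.mem_filter.1 (hts (hmem i))).2
    rcases hN.2 (R.comap e) with hred | hblue
    · left
      obtain ⟨f, hf⟩ := hred
      have hne : ∀ (w : V) (h : w ≠ u), e (f ⟨w, h⟩) ≠ w0 :=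
        fun w h => (hadj (f ⟨w, h⟩)).ne'
      refine ⟨⟨fun w => if h : w = u then w0 else e (f ⟨w, h⟩), ?_⟩, ?_⟩
      · intro a b h
        beta_reduce at h
        by_cases ha : a = u <;> by_cases hb : b = u
        · rw [ha, hb]
        · rw [dif_pos ha, dif_neg hb] at h; exact absurd h.symm (hne b hb)
        · rw [dif_neg ha, dif_pos hb] at h; exact absurd h (hne a ha)
        · rw [dif_neg ha, dif_neg hb] at h
          exact congrArg Subtype.val (f.injective (e.injective h))
      · intro a b hab
        show R.Adj (if h : a = u then w0 else e (f ⟨a, h⟩)) (if h : b = u then w0 else e (f ⟨b, h⟩))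
        by_cases ha : a = u <;> by_cases hb : b = u
        · rw [ha, hb] at hab; exact absurd hab (G.loopless.irrefl u)
        · rw [dif_pos ha, dif_neg hb]; exact hadj _
        · rw [dif_neg ha, dif_pos hb]; exact (hadj _).symm
        · rw [dif_neg ha, dif_neg hb]
          exact hf (by exact hab : (G.induce {w | w ≠ u}).Adj ⟨a, ha⟩ ⟨b, hb⟩)
    · exact Or.inr (copy_comap_compl e hblue)

universe u in
lemma ramsey_exists_aux (k : ℕ) (hk : 1 ≤ k) : ∀ (n : ℕ) (W : Type u) [Fintype W]
    (H : SimpleGraph W), Fintype.card W ≤ n →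
    ∃ N, 0 < N ∧ ∀ R : SimpleGraph (Fin N),
      R.ContainsCopy H ∨ Rᶜ.ContainsCopy (_root_.starGraph k) := by
  intro n
  induction n with
  | zero =>
    intro W _ H hc
    have : IsEmpty W := Fintype.card_eq_zero_iff.1 (le_antisymm hc (Nat.zero_le _))
    exact ⟨1, one_pos, fun R => Or.inl ⟨Function.Embedding.ofIsEmpty, fun a => isEmptyElim a⟩⟩
  | succ n ih =>
    intro W _ H hc
    classical
    by_cases hW : IsEmpty W
    · exact ⟨1, one_pos, fun R => Or.inl ⟨Function.Embedding.ofIsEmpty, fun a => isEmptyElim a⟩⟩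
    · obtain ⟨u⟩ := not_isEmpty_iff.1 hW
      have hcard : Fintype.card ↥{w | w ≠ u} ≤ n := by
        have hlt : Fintype.card ↥{w | w ≠ u} < Fintype.card W :=
          Fintype.card_subtype_lt (x := u) (by simp)
        omega
      obtain ⟨N, hN⟩ := ih ↥{w | w ≠ u} (H.induce {w | w ≠ u}) hcard
      exact ⟨N + k, key H u hk hN⟩

/-- `r(G, K_{1,k}) ≤ r(G - u, K_{1,k}) + k`. -/
theorem stmt0 {V : Type*} [Fintype V] (G : SimpleGraph V) (u : V) (k : ℕ) (hk : 1 ≤ k) :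
    ramseyNumber G (_root_.starGraph k) ≤
      ramseyNumber (G.induce {w | w ≠ u}) (_root_.starGraph k) + k := by
  classical
  obtain ⟨N0, hN0⟩ := ramsey_exists_aux k hk (Fintype.card ↥{w | w ≠ u})
      ↥{w | w ≠ u} (G.induce {w | w ≠ u}) le_rfl
  have hmem : sInf {N | 0 < N ∧ ∀ R : SimpleGraph (Fin N),
      R.ContainsCopy (G.induce {w | w ≠ u}) ∨ Rᶜ.ContainsCopy (_root_.starGraph k)} ∈
      {N | 0 < N ∧ ∀ R : SimpleGraph (Fin N),
      R.ContainsCopy (G.induce {w | w ≠ u}) ∨ Rᶜ.ContainsCopy (_root_.starGraph k)} :=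
    Nat.sInf_mem ⟨N0, hN0⟩
  exact Nat.sInf_le (key G u hk hmem)
end

section
/- For any graph G, any edge uv of G, and any positive integer k, the Ramsey number satisfies r(G, K_{1,k}) ≤ r(G − uv, K_{1,k}) + k, where G − uv denotes G with the edge uv removed. -/
open SimpleGraph Finset

section helpers
variable {α : Type*}

/-- If `B` has a vertex with `k` neighbours, it contains `K_{1,k}`. -/
lemma star_copy_s1 (B : SimpleGraph α) (k : ℕ) (x : α) (s : Finset α)
    (hcard : s.card = k) (hadj : ∀ y ∈ s, B.Adj x y) :
    B.ContainsCopy (_root_.starGraph k) := by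
  classical
  have hx : x ∉ s := fun hxs => B.loopless.irrefl x (hadj x hxs)
  let e : s ≃ Fin k := s.equivFinOfCardEq hcard
  refine ⟨⟨Sum.elim (fun _ => x) (fun i => ((e.symm i : s) : α)), ?_⟩, ?_⟩
  · rintro (a | a) (b | b) hab
    · simp [Fin.eq_zero a, Fin.eq_zero b]
    · exact absurd ((e.symm b).2 ) (by simp only [Sum.elim_inl, Sum.elim_inr] at hab; rw [hab] at hx; exact hx)
    · exact absurd ((e.symm a).2 ) (by simp only [Sum.elim_inl, Sum.elim_inr] at hab; rw [← hab] at hx; exact hx)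
    · simp only [Sum.elim_inr] at hab
      have := Subtype.val_injective hab
      exact congrArg Sum.inr (e.symm.injective this)
  · rintro (a | a) (b | b) hab
    · simp [_root_.starGraph] at hab
    · exact hadj _ (e.symm b).2
    · exact (hadj _ (e.symm a).2).symm
    · simp [_root_.starGraph] at hab

/-- A red clique of size `≥ |W|` gives a red copy of any graph on `W`. -/
lemma clique_copy {W : Type*} [Fintype W] (R : SimpleGraph α) (s : Finset α)
    (hs : ∀ a ∈ s, ∀ b ∈ s, a ≠ b → R.Adj a b) (hcard : Fintype.card W ≤ s.card)
    (G : SimpleGraph W) : R.ContainsCopy G := by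
  classical
  let f : W ↪ α := ((Fintype.equivFin W).toEmbedding.trans
    ((Fin.castLEEmb hcard).trans (s.equivFin.symm.toEmbedding.trans
      (Function.Embedding.subtype _))))
  have hmem : ∀ a, f a ∈ s := fun a => (s.equivFin.symm _).2
  exact ⟨f, fun a b hab => hs _ (hmem a) _ (hmem b) (f.injective.ne hab.ne)⟩

/-- Ramsey numbers against stars exist. -/
lemma ramsey_exists {W : Type*} [Fintype W] (G : SimpleGraph W) (k : ℕ) :
    ∃ N, 0 < N ∧ ∀ R : SimpleGraph (Fin N),
      R.ContainsCopy G ∨ Rᶜ.ContainsCopy (_root_.starGraph k) := by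
  classical
  refine ⟨k * Fintype.card W + 1, Nat.succ_pos _, fun R => ?_⟩
  by_cases hblue : ∃ x, k ≤ (Rᶜ.neighborFinset x).card
  · obtain ⟨x, hx⟩ := hblue
    obtain ⟨s, hs1, hs2⟩ := Finset.exists_subset_card_eq hx
    exact Or.inr (star_copy_s1 _ k x s hs2 fun y hy => (Rᶜ.mem_neighborFinset x y).mp (hs1 hy))
  · push_neg at hblue
    left
    have key : ∀ m, m ≤ Fintype.card W → ∃ s : Finset (Fin (k * Fintype.card W + 1)),
        s.card = m ∧ ∀ a ∈ s, ∀ b ∈ s, a ≠ b → R.Adj a b := by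
      intro m
      induction m with
      | zero => exact fun _ => ⟨∅, by simp⟩
      | succ m ih =>
        intro hm
        obtain ⟨s, hc, hcl⟩ := ih (Nat.le_of_succ_le hm)
        set bad := s ∪ s.biUnion (fun z => Rᶜ.neighborFinset z) with hbad_def
        have hk0 : 1 ≤ k := by
          rcases Nat.eq_zero_or_pos k with h0 | h0
          · exact absurd (hblue ⟨0, Nat.succ_pos _⟩) (by omega)
          · exact h0
        obtain ⟨k', rfl⟩ : ∃ k', k = k' + 1 := ⟨k - 1, by omega⟩
        have hbadcard : bad.card < (k' + 1) * Fintype.card W + 1 := by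
          have h2 : (s.biUnion fun z => Rᶜ.neighborFinset z).card ≤ m * k' := by
            calc (s.biUnion fun z => Rᶜ.neighborFinset z).card
                ≤ ∑ z ∈ s, (Rᶜ.neighborFinset z).card := Finset.card_biUnion_le
              _ ≤ ∑ _z ∈ s, k' := Finset.sum_le_sum fun z _ => by
                    have := hblue z; omega
              _ = m * k' := by rw [Finset.sum_const, hc, smul_eq_mul]
          have h1 : bad.card ≤ s.card + (s.biUnion fun z => Rᶜ.neighborFinset z).card :=
            Finset.card_union_le _ _
          have p2 : (m + 1) * (k' + 1) ≤ Fintype.card W * (k' + 1) :=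
            Nat.mul_le_mul hm (le_refl (k' + 1))
          have p3 : (m + 1) * (k' + 1) = m * k' + m + k' + 1 := by ring
          have p4 : (k' + 1) * Fintype.card W = Fintype.card W * (k' + 1) := by ring
          omega
        have hex : ∃ y, y ∉ bad := by
          by_contra hall
          push_neg at hall
          have : (Finset.univ : Finset (Fin ((k' + 1) * Fintype.card W + 1))) ⊆ bad :=
            fun y _ => hall y
          have := Finset.card_le_card this
          simp only [Finset.card_univ, Fintype.card_fin] at this
          omega
        obtain ⟨y, hy⟩ := hex
        have hys : y ∉ s := fun h => hy (Finset.mem_union_left _ h)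
        refine ⟨insert y s, by rw [Finset.card_insert_of_notMem hys, hc], ?_⟩
        intro a ha b hb hab
        have hadj : ∀ z ∈ s, R.Adj z y := by
          intro z hz
          have hnb : y ∉ Rᶜ.neighborFinset z := fun h =>
            hy (Finset.mem_union_right _ (Finset.mem_biUnion.mpr ⟨z, hz, h⟩))
          rw [SimpleGraph.mem_neighborFinset, SimpleGraph.compl_adj] at hnb
          push_neg at hnb
          have hzy : z ≠ y := fun h => hys (h ▸ hz)
          exact hnb hzy
        rcases Finset.mem_insert.mp ha with ha' | ha' <;>
          rcases Finset.mem_insert.mp hb with hb' | hb'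
        · exact absurd (ha'.trans hb'.symm) hab
        · subst ha'; exact (hadj b hb').symm
        · subst hb'; exact hadj a ha'
        · exact hcl a ha' b hb' hab
    obtain ⟨s, h1, h2⟩ := key (Fintype.card W) le_rfl
    exact clique_copy R s h2 h1.ge G

end helpers

/-- `r(G, K_{1,k}) ≤ r(G - uv, K_{1,k}) + k`. -/
theorem stmt1 {V : Type*} [Fintype V] (G : SimpleGraph V) (u v : V) (huv : G.Adj u v)
    (k : ℕ) (hk : 1 ≤ k) :
    ramseyNumber G (_root_.starGraph k) ≤
      ramseyNumber (G.deleteEdges {s(u, v)}) (_root_.starGraph k) + k := by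
  classical
  obtain ⟨N₀, hN₀⟩ := ramsey_exists (G.deleteEdges {s(u, v)}) k
  have hne : {N | 0 < N ∧ ∀ R : SimpleGraph (Fin N),
      R.ContainsCopy (G.deleteEdges {s(u, v)}) ∨ Rᶜ.ContainsCopy (_root_.starGraph k)}.Nonempty :=
    ⟨N₀, hN₀⟩
  have hr' : 0 < ramseyNumber (G.deleteEdges {s(u, v)}) (_root_.starGraph k) ∧
      ∀ R : SimpleGraph (Fin (ramseyNumber (G.deleteEdges {s(u, v)}) (_root_.starGraph k))),
        R.ContainsCopy (G.deleteEdges {s(u, v)}) ∨ Rᶜ.ContainsCopy (_root_.starGraph k) :=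
    Nat.sInf_mem hne
  set r' := ramseyNumber (G.deleteEdges {s(u, v)}) (_root_.starGraph k) with hr'def
  obtain ⟨hr'pos, hr'prop⟩ := hr'
  apply Nat.sInf_le
  simp only [Set.mem_setOf_eq]
  refine ⟨by omega, fun R => ?_⟩
  by_cases hblue : ∃ x, k ≤ (Rᶜ.neighborFinset x).card
  · obtain ⟨x, hx⟩ := hblue
    obtain ⟨s, hs1, hs2⟩ := Finset.exists_subset_card_eq hx
    exact Or.inr (star_copy_s1 _ k x s hs2 fun y hy => (Rᶜ.mem_neighborFinset x y).mp (hs1 hy))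
  · push_neg at hblue
    have hpos : 0 < r' + k := by omega
    set x : Fin (r' + k) := ⟨0, hpos⟩ with hxdef
    have hdeg : r' ≤ (R.neighborFinset x).card := by
      have hcover : (Finset.univ : Finset (Fin (r' + k))) ⊆
          insert x (R.neighborFinset x ∪ Rᶜ.neighborFinset x) := by
        intro y _
        by_cases hxy : y = x
        · exact hxy ▸ Finset.mem_insert_self _ _
        · by_cases hadj : R.Adj x y
          · exact Finset.mem_insert_of_mem
              (Finset.mem_union_left _ ((R.mem_neighborFinset x y).mpr hadj))
          · exact Finset.mem_insert_of_mem (Finset.mem_union_right _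
              ((Rᶜ.mem_neighborFinset x y).mpr ⟨fun h => hxy h.symm, hadj⟩))
      have h1 := Finset.card_le_card hcover
      have h2 := Finset.card_insert_le x (R.neighborFinset x ∪ Rᶜ.neighborFinset x)
      have h3 := Finset.card_union_le (R.neighborFinset x) (Rᶜ.neighborFinset x)
      have h4 := hblue x
      simp only [Finset.card_univ, Fintype.card_fin] at h1
      omega
    obtain ⟨T, hT1, hT2⟩ := Finset.exists_subset_card_eq hdeg
    let e : T ≃ Fin r' := T.equivFinOfCardEq hT2
    let j : Fin r' → Fin (r' + k) := fun i => ((e.symm i : T) : Fin (r' + k))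
    have hjinj : Function.Injective j :=
      fun a b h => e.symm.injective (Subtype.val_injective h)
    have hjmem : ∀ i, j i ∈ T := fun i => (e.symm i).2
    have hjadj : ∀ i, R.Adj x (j i) :=
      fun i => (R.mem_neighborFinset x _).mp (hT1 (hjmem i))
    rcases hr'prop (R.comap j) with ⟨f₀, hf₀⟩ | ⟨f₀, hf₀⟩
    · left
      have hxnotj : ∀ i, j i ≠ x := fun i h => R.loopless.irrefl x (h ▸ hjadj i)
      let g : V → Fin (r' + k) := fun w => if w = u then x else j (f₀ w)
      have hginj : Function.Injective g := by
        intro a b hab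
        by_cases ha : a = u <;> by_cases hb : b = u
        · rw [ha, hb]
        · simp only [g, if_pos ha, if_neg hb] at hab
          exact absurd hab.symm (hxnotj _)
        · simp only [g, if_neg ha, if_pos hb] at hab
          exact absurd hab (hxnotj _)
        · simp only [g, if_neg ha, if_neg hb] at hab
          exact f₀.injective (hjinj hab)
      refine ⟨⟨g, hginj⟩, fun a b hab => ?_⟩
      show R.Adj (g a) (g b)
      by_cases ha : a = u <;> by_cases hb : b = u
      · exact absurd (ha.trans hb.symm) hab.ne
      · simp only [g, if_pos ha, if_neg hb]
        exact hjadj _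
      · simp only [g, if_neg ha, if_pos hb]
        exact (hjadj _).symm
      · simp only [g, if_neg ha, if_neg hb]
        have hdel : (G.deleteEdges {s(u, v)}).Adj a b := by
          rw [SimpleGraph.deleteEdges_adj]
          refine ⟨hab, ?_⟩
          simp only [Set.mem_singleton_iff, Sym2.eq_iff]
          rintro (⟨rfl, rfl⟩ | ⟨rfl, rfl⟩)
          · exact ha rfl
          · exact hb rfl
        exact hf₀ hdel
    · right
      refine ⟨f₀.trans ⟨j, hjinj⟩, fun a b hab => ?_⟩
      have h := hf₀ hab
      rw [SimpleGraph.compl_adj] at h ⊢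
      exact ⟨hjinj.ne h.1, h.2⟩
end

section
/- For every unicyclic graph G on n vertices and every positive integer k, the Ramsey number satisfies r(G, K_{1,k}) ≤ n + 2k − 2. -/
open SimpleGraph Finset

/-- An edge of a path incident to the start vertex goes to `getVert 1`. -/
lemma path_edge_start {V : Type*} {T : SimpleGraph V} {v u w : V}
    (p : T.Walk v u) (hp : p.IsPath) (he : s(v, w) ∈ p.edges) : w = p.getVert 1 := by
  cases p with
  | nil => simp at he
  | cons h q =>
    rw [SimpleGraph.Walk.edges_cons, List.mem_cons] at he
    rcases he with he | he
    · rw [Sym2.congr_right] at he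
      simpa [SimpleGraph.Walk.getVert_cons_succ] using he
    · exfalso
      have hv : v ∈ q.support := q.fst_mem_support_of_mem_edges he
      rw [SimpleGraph.Walk.cons_isPath_iff] at hp
      exact hp.2 hv

/-- Forest degeneracy: in an acyclic graph, every nonempty finite set contains
a vertex with at most one neighbour inside the set. -/
lemma forest_degeneracy {V : Type*} [Fintype V] [DecidableEq V] {T : SimpleGraph V}
    [DecidableRel T.Adj] (hT : T.IsAcyclic) (S : Finset V) (hS : S.Nonempty) :
    ∃ x ∈ S, (S.filter (T.Adj x)).card ≤ 1 := by
  by_contra hcon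
  push_neg at hcon
  have key : ∀ m : ℕ, ∃ (v u : V) (p : T.Walk v u),
      p.IsPath ∧ p.support.toFinset ⊆ S ∧ m ≤ p.length := by
    intro m
    induction m with
    | zero =>
      obtain ⟨x, hx⟩ := hS
      exact ⟨x, x, SimpleGraph.Walk.nil, by simp, by simpa using hx, by simp⟩
    | succ m ih =>
      obtain ⟨v, u, p, hp, hsub, hlen⟩ := ih
      have hvS : v ∈ S := by
        apply hsub; simp [SimpleGraph.Walk.start_mem_support]
      have h2 : 2 ≤ (S.filter (T.Adj v)).card := hcon v hvS
      have : ((S.filter (T.Adj v)) \ {p.getVert 1}).Nonempty := by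
        rw [← Finset.card_pos]
        have h1 : ((S.filter (T.Adj v)) \ {p.getVert 1}).card + 1 ≥
            (S.filter (T.Adj v)).card := by
          have := Finset.card_le_card_sdiff_add_card (s := S.filter (T.Adj v))
            (t := {p.getVert 1})
          simpa using this
        omega
      obtain ⟨w, hw⟩ := this
      rw [Finset.mem_sdiff, Finset.mem_filter, Finset.mem_singleton] at hw
      obtain ⟨⟨hwS, hadj⟩, hwne⟩ := hw
      by_cases hsup : w ∈ p.support
      · exfalso
        have hq : (p.takeUntil w hsup).IsPath := hp.takeUntil hsup
        have hne : s(w, v) ∉ (p.takeUntil w hsup).edges := by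
          intro hmem
          rw [Sym2.eq_swap] at hmem
          have hmem' : s(v, w) ∈ p.edges := p.edges_takeUntil_subset hsup hmem
          exact hwne (path_edge_start p hp hmem')
        have hcyc : (SimpleGraph.Walk.cons hadj.symm (p.takeUntil w hsup)).IsCycle := by
          rw [SimpleGraph.Walk.cons_isCycle_iff]
          exact ⟨hq, hne⟩
        exact hT _ hcyc
      · refine ⟨w, u, SimpleGraph.Walk.cons hadj.symm p, ?_, ?_, ?_⟩
        · rw [SimpleGraph.Walk.cons_isPath_iff]; exact ⟨hp, hsup⟩
        · intro z hz
          simp only [SimpleGraph.Walk.support_cons, List.toFinset_cons, Finset.mem_insert] at hz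
          rcases hz with rfl | hz
          · exact hwS
          · exact hsub hz
        · simp only [SimpleGraph.Walk.length_cons]; omega
  obtain ⟨v, u, p, hp, hsub, hlen⟩ := key (Fintype.card V)
  exact absurd hp.length_lt (by omega)


/-- Deleting a non-bridge edge keeps the graph connected. -/
lemma connected_delete_edge {V : Type*} {H : SimpleGraph V} {v w : V}
    (hr : (H \ fromEdgeSet {s(v, w)}).Reachable v w) (hc : H.Connected) :
    (H \ fromEdgeSet {s(v, w)}).Connected := by
  have hne : Nonempty V := hc.nonempty
  have hpre : (H \ fromEdgeSet {s(v, w)}).Preconnected := by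
    intro a b
    obtain ⟨p⟩ := hc.preconnected a b
    induction p with
    | nil => exact SimpleGraph.Reachable.refl _
    | @cons x y z h q ih =>
      refine SimpleGraph.Reachable.trans ?_ ih
      by_cases he : s(x, y) = s(v, w)
      · rw [Sym2.eq_iff] at he
        rcases he with ⟨rfl, rfl⟩ | ⟨rfl, rfl⟩
        · exact hr
        · exact hr.symm
      · exact SimpleGraph.Adj.reachable (by
          rw [SimpleGraph.sdiff_adj]
          refine ⟨h, ?_⟩
          rw [SimpleGraph.fromEdgeSet_adj]
          rintro ⟨hmem, -⟩
          exact he hmem)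
  exact SimpleGraph.Connected.mk hpre

/-- Every connected graph on a finite vertex type has a spanning tree. -/
lemma exists_spanning_tree {V : Type*} [Fintype V] (H : SimpleGraph V)
    (hc : H.Connected) : ∃ T : SimpleGraph V, T ≤ H ∧ T.IsTree := by
  classical
  suffices h : ∀ (m : ℕ) (H : SimpleGraph V), H.edgeSet.ncard ≤ m → H.Connected →
      ∃ T : SimpleGraph V, T ≤ H ∧ T.IsTree from h H.edgeSet.ncard H le_rfl hc
  intro m
  induction m with
  | zero =>
    intro H hm hc
    refine ⟨H, le_rfl, hc, fun v c hcyc => ?_⟩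
    have h3 : 3 ≤ c.length := hcyc.three_le_length
    have : c.edges ≠ [] := by
      intro h
      have := SimpleGraph.Walk.length_edges c
      rw [h] at this
      simp at this
      omega
    obtain ⟨e, hemem⟩ := List.exists_mem_of_ne_nil _ this
    have : e ∈ H.edgeSet := c.edges_subset_edgeSet hemem
    have : H.edgeSet.ncard = 0 := le_antisymm hm (Nat.zero_le _)
    rw [Set.ncard_eq_zero (Set.toFinite _)] at this
    simp [this] at *
  | succ m ih =>
    intro H hm hc
    by_cases hacyc : H.IsAcyclic
    · exact ⟨H, le_rfl, hc, hacyc⟩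
    · rw [SimpleGraph.isAcyclic_iff_forall_adj_isBridge] at hacyc
      push_neg at hacyc
      obtain ⟨v, w, hadj, hbr⟩ := hacyc
      rw [SimpleGraph.isBridge_iff] at hbr
      have hr : (H \ fromEdgeSet {s(v, w)}).Reachable v w := by
        by_contra hr
        exact hbr hr
      have hc' : (H \ fromEdgeSet {s(v, w)}).Connected := connected_delete_edge hr hc
      have hE : (H \ fromEdgeSet {s(v, w)}).edgeSet = H.edgeSet \ {s(v, w)} := by
        rw [SimpleGraph.edgeSet_sdiff, SimpleGraph.edgeSet_fromEdgeSet,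
          SimpleGraph.edgeSet_sdiff_sdiff_isDiag]
      have hcard : (H \ fromEdgeSet {s(v, w)}).edgeSet.ncard ≤ m := by
        rw [hE]
        have hmem : s(v, w) ∈ H.edgeSet := hadj
        have := Set.ncard_diff_singleton_lt_of_mem hmem (Set.toFinite _)
        omega
      obtain ⟨T, hle, hT⟩ := ih _ hcard hc'
      exact ⟨T, le_trans hle sdiff_le, hT⟩

/-- Degeneracy of unicyclic graphs. -/
lemma unicyclic_degeneracy {V : Type*} [Fintype V] [DecidableEq V] {G : SimpleGraph V}
    [DecidableRel G.Adj] {n : ℕ} (hcard : Fintype.card V = n) (hconn : G.Connected)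
    (he : G.edgeSet.ncard = n) (S : Finset V) (hS : S.Nonempty) :
    ∃ x ∈ S, (S.filter (G.Adj x)).card ≤ 2 := by
  classical
  obtain ⟨T, hle, hT⟩ := exists_spanning_tree G hconn
  have hGcard : G.edgeFinset.card = n := by
    rw [← Set.ncard_coe_finset, coe_edgeFinset]; exact he
  have hTcard : T.edgeFinset.card + 1 = n := by rw [← hcard]; exact hT.card_edgeFinset
  have hsub : T.edgeFinset ⊆ G.edgeFinset := edgeFinset_mono hle
  have hdiff : (G.edgeFinset \ T.edgeFinset).card = 1 := by
    rw [Finset.card_sdiff_of_subset hsub]; omega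
  obtain ⟨x, hx, hfil⟩ := forest_degeneracy hT.IsAcyclic S hS
  refine ⟨x, hx, ?_⟩
  have hsplit : S.filter (G.Adj x) ⊆
      S.filter (T.Adj x) ∪ S.filter (fun y => G.Adj x y ∧ ¬ T.Adj x y) := by
    intro y hy
    rw [Finset.mem_filter] at hy
    by_cases hT' : T.Adj x y <;>
      simp [Finset.mem_union, Finset.mem_filter, hy.1, hy.2, hT']
  have hcard2 : (S.filter (fun y => G.Adj x y ∧ ¬ T.Adj x y)).card ≤ 1 := by
    rw [← hdiff]
    apply Finset.card_le_card_of_injOn (fun y => s(x, y))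
    · intro y hy
      rw [Finset.mem_coe, Finset.mem_filter] at hy
      rw [Finset.mem_coe, Finset.mem_sdiff, SimpleGraph.mem_edgeFinset, SimpleGraph.mem_edgeFinset]
      exact ⟨hy.2.1, fun h => hy.2.2 h⟩
    · intro y1 _ y2 _ h
      exact Sym2.congr_right.mp h
  calc (S.filter (G.Adj x)).card
      ≤ (S.filter (T.Adj x) ∪ S.filter (fun y => G.Adj x y ∧ ¬ T.Adj x y)).card :=
        Finset.card_le_card hsplit
    _ ≤ (S.filter (T.Adj x)).card + (S.filter (fun y => G.Adj x y ∧ ¬ T.Adj x y)).card :=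
        Finset.card_union_le _ _
    _ ≤ 2 := by omega

/-- If some vertex has `k` neighbours in `B`, then `B` contains a copy of `K_{1,k}`. -/
lemma star_copy_s2 {N k : ℕ} {B : SimpleGraph (Fin N)} {v : Fin N}
    (h : k ≤ (B.neighborSet v).ncard) : B.ContainsCopy (_root_.starGraph k) := by
  classical
  have h' : k ≤ (B.neighborFinset v).card := by
    rwa [neighborFinset_def, ← Set.ncard_eq_toFinset_card']
  obtain ⟨t, hts, htc⟩ := Finset.exists_subset_card_eq h'
  have hmem : ∀ i : Fin k, B.Adj v ((t.orderIsoOfFin htc i : Fin N)) := by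
    intro i
    have : (t.orderIsoOfFin htc i : Fin N) ∈ B.neighborFinset v :=
      hts (t.orderIsoOfFin htc i).2
    rwa [SimpleGraph.mem_neighborFinset] at this
  refine ⟨⟨Sum.elim (fun _ => v) (fun i => (t.orderIsoOfFin htc i : Fin N)), ?_⟩, ?_⟩
  · rintro (a | a) (b | b) hab
    · simp [Subsingleton.elim a b]
    · exfalso
      simp only [Sum.elim_inl, Sum.elim_inr] at hab
      exact (hmem b).ne hab
    · exfalso
      simp only [Sum.elim_inl, Sum.elim_inr] at hab
      exact (hmem a).ne hab.symm
    · simp only [Sum.elim_inr] at hab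
      have := Subtype.coe_injective hab
      simpa using (t.orderIsoOfFin htc).injective this
  · rintro (a | a) (b | b) hab <;>
      simp only [_root_.starGraph, completeBipartiteGraph] at hab
    · simp at hab
    · exact hmem b
    · exact (hmem a).symm
    · simp at hab

/-- The greedy embedding of a 2-degenerate graph. -/
lemma embed_unicyclic {V : Type*} [Fintype V] [DecidableEq V] {G : SimpleGraph V}
    [DecidableRel G.Adj] {n k N : ℕ} (hk : 1 ≤ k) (hcard : Fintype.card V = n)
    (hconn : G.Connected) (he : G.edgeSet.ncard = n) (hN : N = n + 2 * (k - 1))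
    (R : SimpleGraph (Fin N))
    (hdeg : ∀ v : Fin N, (Rᶜ.neighborSet v).ncard ≤ k - 1) :
    R.ContainsCopy G := by
  classical
  have hn1 : 1 ≤ n := by
    rw [← hcard]
    exact Fintype.card_pos_iff.mpr hconn.nonempty
  have hN0 : 0 < N := by omega
  have hdeg' : ∀ v : Fin N, (Rᶜ.neighborFinset v).card ≤ k - 1 := by
    intro v
    rw [neighborFinset_def, ← Set.ncard_eq_toFinset_card']
    exact hdeg v
  have key : ∀ m : ℕ, ∀ S : Finset V, S.card = m →
      ∃ f : V → Fin N, Set.InjOn f ↑S ∧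
        ∀ a ∈ S, ∀ b ∈ S, G.Adj a b → R.Adj (f a) (f b) := by
    intro m
    induction m with
    | zero =>
      intro S hScard
      rw [Finset.card_eq_zero] at hScard
      subst hScard
      exact ⟨fun _ => ⟨0, hN0⟩, by simp, by simp⟩
    | succ m ih =>
      intro S hScard
      have hSne : S.Nonempty := by rw [← Finset.card_pos]; omega
      obtain ⟨x, hxS, hxdeg⟩ := unicyclic_degeneracy hcard hconn he S hSne
      set S' := S.erase x with hS'
      have hS'card : S'.card = m := by
        rw [hS', Finset.card_erase_of_mem hxS]; omega
      obtain ⟨f, hinj, hadj⟩ := ih S' hS'card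
      set B := S'.image f ∪ (S.filter (G.Adj x)).biUnion (fun y => Rᶜ.neighborFinset (f y))
        with hB
      have hBcard : B.card < N := by
        have h1 : (S'.image f).card ≤ m := by
          calc (S'.image f).card ≤ S'.card := Finset.card_image_le
            _ = m := hS'card
        have h2 : ((S.filter (G.Adj x)).biUnion (fun y => Rᶜ.neighborFinset (f y))).card
            ≤ 2 * (k - 1) := by
          calc ((S.filter (G.Adj x)).biUnion (fun y => Rᶜ.neighborFinset (f y))).card
              ≤ ∑ y ∈ S.filter (G.Adj x), (Rᶜ.neighborFinset (f y)).card :=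
                Finset.card_biUnion_le
            _ ≤ (S.filter (G.Adj x)).card * (k - 1) :=
                Finset.sum_le_card_nsmul _ _ _ (fun y _ => hdeg' (f y))
            _ ≤ 2 * (k - 1) := Nat.mul_le_mul_right _ hxdeg
        have h3 : B.card ≤ m + 2 * (k - 1) := by
          calc B.card ≤ (S'.image f).card +
              ((S.filter (G.Adj x)).biUnion (fun y => Rᶜ.neighborFinset (f y))).card :=
                Finset.card_union_le _ _
            _ ≤ m + 2 * (k - 1) := by omega
        have hmn : m + 1 ≤ n := by
          rw [← hScard, ← hcard]
          exact Finset.card_le_card (Finset.subset_univ S) |>.trans (by rw [Finset.card_univ])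
        omega
      have hz : ∃ z : Fin N, z ∉ B := by
        by_contra hcon
        push_neg at hcon
        have : (Finset.univ : Finset (Fin N)) ⊆ B := fun z _ => hcon z
        have := Finset.card_le_card this
        rw [Finset.card_univ, Fintype.card_fin] at this
        omega
      obtain ⟨z, hzB⟩ := hz
      have hzim : z ∉ S'.image f := fun h => hzB (Finset.mem_union_left _ h)
      have hfeq : ∀ a ∈ S', Function.update f x z a = f a := by
        intro a ha
        exact Function.update_of_ne (Finset.ne_of_mem_erase ha) _ _
      have hmemS' : ∀ a ∈ S, a ≠ x → a ∈ S' := by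
        intro a ha hne
        exact Finset.mem_erase.mpr ⟨hne, ha⟩
      -- the new vertex is adjacent to images of its neighbours
      have hstep : ∀ b ∈ S, G.Adj x b → R.Adj z (f b) := by
        intro b hb hGadj
        have hbS' : b ∈ S' := hmemS' b hb hGadj.ne'
        have hbfil : b ∈ S.filter (G.Adj x) := Finset.mem_filter.mpr ⟨hb, hGadj⟩
        have hznb : z ∉ Rᶜ.neighborFinset (f b) := by
          intro h
          exact hzB (Finset.mem_union_right _ (Finset.mem_biUnion.mpr ⟨b, hbfil, h⟩))
        rw [SimpleGraph.mem_neighborFinset, SimpleGraph.compl_adj] at hznb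
        push_neg at hznb
        have hne : f b ≠ z := by
          intro h
          exact hzim (h ▸ Finset.mem_image_of_mem f hbS')
        exact (hznb hne).symm
      refine ⟨Function.update f x z, ?_, ?_⟩
      · intro a ha b hb hab
        rw [Finset.mem_coe] at ha hb
        by_cases hax : a = x <;> by_cases hbx : b = x
        · rw [hax, hbx]
        · exfalso
          have hbS' : b ∈ S' := hmemS' b hb hbx
          have e1 : Function.update f x z a = z := by rw [hax, Function.update_self]
          rw [e1, hfeq b hbS'] at hab
          exact hzim (hab ▸ Finset.mem_image_of_mem f hbS')
        · exfalso
          have haS' : a ∈ S' := hmemS' a ha hax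
          have e1 : Function.update f x z b = z := by rw [hbx, Function.update_self]
          rw [e1, hfeq a haS'] at hab
          exact hzim (hab ▸ Finset.mem_image_of_mem f haS')
        · have haS' : a ∈ S' := hmemS' a ha hax
          have hbS' : b ∈ S' := hmemS' b hb hbx
          rw [hfeq a haS', hfeq b hbS'] at hab
          exact hinj (Finset.mem_coe.mpr haS') (Finset.mem_coe.mpr hbS') hab
      · intro a ha b hb hGadj
        by_cases hax : a = x <;> by_cases hbx : b = x
        · exfalso
          rw [hax, hbx] at hGadj
          exact G.loopless.irrefl x hGadj
        · have hbS' : b ∈ S' := hmemS' b hb hbx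
          have e1 : Function.update f x z a = z := by rw [hax, Function.update_self]
          rw [e1, hfeq b hbS']
          exact hstep b hb (by rw [← hax]; exact hGadj)
        · have haS' : a ∈ S' := hmemS' a ha hax
          have e1 : Function.update f x z b = z := by rw [hbx, Function.update_self]
          rw [e1, hfeq a haS']
          exact (hstep a ha (by rw [← hbx]; exact hGadj.symm)).symm
        · have haS' : a ∈ S' := hmemS' a ha hax
          have hbS' : b ∈ S' := hmemS' b hb hbx
          rw [hfeq a haS', hfeq b hbS']
          exact hadj a haS' b hbS' hGadj
  obtain ⟨f, hinj, hadj⟩ := key n Finset.univ (by rw [Finset.card_univ, hcard])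
  refine ⟨⟨f, ?_⟩, ?_⟩
  · intro a b hab
    exact hinj (by simp) (by simp) hab
  · intro a b hGadj
    exact hadj a (Finset.mem_univ a) b (Finset.mem_univ b) hGadj

/-- for a unicyclic graph `G` (connected, with `n` vertices and `n` edges),
`r(G, K_{1,k}) ≤ n + 2k - 2`. -/
theorem stmt2 {V : Type*} [Fintype V] (G : SimpleGraph V) (n k : ℕ) (hk : 1 ≤ k)
    (hcard : Fintype.card V = n) (hconn : G.Connected) (he : G.edgeSet.ncard = n) :
    ramseyNumber G (_root_.starGraph k) ≤ n + 2 * k - 2 := by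
  classical
  have hn1 : 1 ≤ n := by rw [← hcard]; exact Fintype.card_pos_iff.mpr hconn.nonempty
  have hmem : (n + 2 * k - 2) ∈ {N | 0 < N ∧ ∀ R : SimpleGraph (Fin N),
      R.ContainsCopy G ∨ Rᶜ.ContainsCopy (_root_.starGraph k)} := by
    constructor
    · omega
    · intro R
      by_cases hstar : Rᶜ.ContainsCopy (_root_.starGraph k)
      · exact Or.inr hstar
      · refine Or.inl ?_
        have hdeg : ∀ v : Fin (n + 2 * k - 2), (Rᶜ.neighborSet v).ncard ≤ k - 1 := by
          intro v
          by_contra hlt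
          push_neg at hlt
          exact hstar (star_copy_s2 (v := v) (by omega))
        exact embed_unicyclic hk hcard hconn he (by omega) R hdeg
  exact Nat.sInf_le hmem
end

section
/- Let n and k be positive integers with n ≥ 2k + 1. If G is a connected graph with n vertices and at most n(1 + 1/(2k+1)) edges, then G contains at least k vertices of degree at most 2. -/
open SimpleGraph Finset

/-- a connected graph on `n ≥ 2k+1` vertices with at most `n(1 + 1/(2k+1))`
edges has at least `k` vertices of degree at most 2. -/
theorem stmt3 {V : Type*} [Fintype V] (G : SimpleGraph V) (n k : ℕ) (hk : 1 ≤ k)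
    (hn : 2 * k + 1 ≤ n) (hcard : Fintype.card V = n) (hconn : G.Connected)
    (he : (G.edgeSet.ncard : ℚ) ≤ (n : ℚ) * (1 + 1 / (2 * (k : ℚ) + 1))) :
    k ≤ {v : V | (G.neighborSet v).ncard ≤ 2}.ncard := by
  classical
  -- degrees
  have hdeg : ∀ v : V, (G.neighborSet v).ncard = G.degree v := by
    intro v
    rw [← Nat.card_coe_set_eq, Nat.card_eq_fintype_card,
      SimpleGraph.card_neighborSet_eq_degree]
  have hNontriv : Nontrivial V := by
    apply Fintype.one_lt_card_iff_nontrivial.mp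
    omega
  have hdegpos : ∀ v : V, 1 ≤ G.degree v := by
    intro v
    obtain ⟨w, hw⟩ := exists_ne v
    obtain ⟨p⟩ := hconn.preconnected v w
    cases p with
    | nil => exact absurd rfl hw.symm
    | cons h q => exact (G.degree_pos_iff_exists_adj v).mpr ⟨_, h⟩
  set A : Finset V := Finset.univ.filter (fun v => G.degree v ≤ 2) with hA
  have hsetA : {v : V | (G.neighborSet v).ncard ≤ 2} = ↑A := by
    ext v; simp [hA, hdeg v]
  rw [hsetA, Set.ncard_coe_finset]
  -- key counting
  have hsum : 2 * G.edgeFinset.card + 2 * A.card ≥ 3 * n := by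
    calc 3 * n = ∑ _v : V, 3 := by simp [hcard, mul_comm]
    _ ≤ ∑ v : V, (G.degree v + if v ∈ A then 2 else 0) := by
        apply Finset.sum_le_sum
        intro v _
        by_cases hv : v ∈ A
        · simp only [hv, if_true]
          have := hdegpos v; omega
        · simp only [hv, if_false]
          simp [hA] at hv; omega
    _ = 2 * G.edgeFinset.card + 2 * A.card := by
        rw [Finset.sum_add_distrib, G.sum_degrees_eq_twice_card_edges,
          Finset.sum_ite_mem, Finset.univ_inter, Finset.sum_const, smul_eq_mul]
        ring
  have hecard : G.edgeSet.ncard = G.edgeFinset.card := by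
    rw [← Nat.card_coe_set_eq, Nat.card_eq_fintype_card]
    simp [Set.toFinset_card, edgeFinset]
  -- now rational arithmetic
  have hq : (2 : ℚ) * A.card ≥ 2 * k - 1 := by
    have h1 : (3 : ℚ) * n ≤ 2 * G.edgeFinset.card + 2 * A.card := by exact_mod_cast hsum
    have h2 : (G.edgeFinset.card : ℚ) ≤ (n : ℚ) * (1 + 1 / (2 * (k : ℚ) + 1)) := by
      rw [← hecard] at *; push_cast at he ⊢; exact_mod_cast he
    have hkpos : (0 : ℚ) < 2 * (k : ℚ) + 1 := by positivity
    have hnq : (2 * (k : ℚ) + 1) ≤ n := by exact_mod_cast hn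
    have key : (n : ℚ) * ((2 * k - 1) / (2 * k + 1)) ≤ 2 * A.card := by
      have : (n : ℚ) * ((2 * k - 1) / (2 * k + 1)) = 3 * n - 2 * ((n:ℚ) * (1 + 1/(2*k+1))) := by
        field_simp; ring
      rw [this]; linarith
    have key2 : (2 * (k:ℚ) - 1) ≤ (n : ℚ) * ((2 * k - 1) / (2 * k + 1)) := by
      have h3 : (0:ℚ) ≤ 2 * (k:ℚ) - 1 := by
        have : (1:ℚ) ≤ k := by exact_mod_cast hk
        linarith
      rw [mul_div_assoc', le_div_iff₀ hkpos]
      nlinarith [mul_le_mul_of_nonneg_right hnq h3]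
    linarith
  have hfin : 2 * k ≤ 2 * A.card + 1 := by
    have : ((2*k : ℕ) : ℚ) ≤ ((2 * A.card + 1 : ℕ) : ℚ) := by push_cast; linarith
    exact_mod_cast this
  omega
end

section
/- Let n and k be positive integers. If G is a connected graph with n vertices and at most n(1 + 1/(2k+1)) edges, then r(G, K_{1,k}) ≤ n + 2k − 2. -/
open SimpleGraph Finset

lemma peel_exists {V : Type*} [Fintype V] [DecidableEq V]
    (G : SimpleGraph V) [DecidableRel G.Adj] (s : Finset V) :
    ∃ (C : Finset V) (L : List V), L.Nodup ∧ L.toFinset = s ∧ C ⊆ s ∧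
      (∀ v ∈ C, 3 ≤ (G.neighborFinset v ∩ C).card) ∧
      (∀ (p q : List V) (v : V), L = p ++ v :: q → C.card ≤ p.length →
        (G.neighborFinset v ∩ p.toFinset).card ≤ 2) := by
  classical
  induction s using Finset.strongInduction with
  | _ s ih =>
    by_cases hex : ∃ v ∈ s, (G.neighborFinset v ∩ s.erase v).card ≤ 2
    · obtain ⟨v, hv, hdeg⟩ := hex
      obtain ⟨C, L, hnd, htf, hCs, hmin, hsplit⟩ := ih (s.erase v) (Finset.erase_ssubset hv)
      have hvL : v ∉ L := by
        intro h
        have : v ∈ s.erase v := htf ▸ List.mem_toFinset.mpr h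
        exact (Finset.notMem_erase v s) this
      refine ⟨C, L ++ [v], ?_, ?_, hCs.trans (Finset.erase_subset _ _), hmin, ?_⟩
      · rw [List.nodup_append]
        exact ⟨hnd, List.nodup_singleton v, by intro a ha b hb; simp at hb; subst hb; intro h; exact hvL (h ▸ ha)⟩
      · have h : (L ++ [v]).toFinset = insert v (s.erase v) := by
          rw [List.toFinset_append, htf]; simp
        rw [h, Finset.insert_erase hv]
      · intro p q w hpq hlen
        rcases q.eq_nil_or_concat with rfl | ⟨q', x, rfl⟩
        · have hlen2 : L.length = p.length := by
            have h := congrArg List.length hpq; simp at h; omega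
          have h1 : L = p ∧ [v] = [w] := List.append_inj hpq hlen2
          obtain ⟨rfl, hw⟩ := h1
          have hw' : v = w := by simpa using hw
          subst hw'
          rw [htf]
          exact hdeg
        · rw [List.concat_eq_append] at hpq
          have h2 : L ++ [v] = (p ++ w :: q') ++ [x] := by rw [hpq]; simp
          have hlen2 : L.length = (p ++ w :: q').length := by
            have h := congrArg List.length h2; simp at h; simp; omega
          have h3 : L = p ++ w :: q' ∧ [v] = [x] := List.append_inj h2 hlen2
          exact hsplit p q' w h3.1 hlen
    · push_neg at hex
      refine ⟨s, s.toList, s.nodup_toList, s.toList_toFinset, le_refl s, ?_, ?_⟩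
      · intro v hv
        have h1 := hex v hv
        have h2 : G.neighborFinset v ∩ s.erase v = G.neighborFinset v ∩ s := by
          rw [Finset.inter_comm, Finset.erase_inter, Finset.inter_comm,
            Finset.erase_eq_of_notMem]
          simp [SimpleGraph.notMem_neighborFinset_self]
        rw [h2] at h1
        omega
      · intro p q v hpq hlen
        have := congrArg List.length hpq
        rw [Finset.length_toList] at this
        simp at this
        omega

lemma core_bound {V : Type*} [Fintype V] [DecidableEq V]
    (G : SimpleGraph V) [DecidableRel G.Adj] (hconn : G.Connected)
    (C : Finset V) (hC : C.Nonempty) (hmin : ∀ v ∈ C, 3 ≤ (G.neighborFinset v ∩ C).card) :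
    C.card + 2 * Fintype.card V ≤ 2 * G.edgeFinset.card := by
  classical
  -- the graph of edges inside C
  let Gs : SimpleGraph V :=
    { Adj := fun a b => G.Adj a b ∧ a ∈ C ∧ b ∈ C,
      symm := ⟨fun a b h => ⟨h.1.symm, h.2.2, h.2.1⟩⟩,
      loopless := ⟨fun a h => G.loopless.irrefl a h.1⟩ }
  have hGsdeg : ∀ v ∈ C, Gs.degree v = (G.neighborFinset v ∩ C).card := by
    intro v hv
    rw [SimpleGraph.degree]
    congr 1
    ext w
    simp only [SimpleGraph.mem_neighborFinset, Finset.mem_inter]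
    show (G.Adj v w ∧ v ∈ C ∧ w ∈ C) ↔ _
    tauto
  -- 3|C| ≤ sum of internal degrees = 2 * internal edges
  have h3C : 3 * C.card ≤ 2 * Gs.edgeFinset.card := by
    rw [← SimpleGraph.sum_degrees_eq_twice_card_edges]
    calc 3 * C.card = ∑ _v ∈ C, 3 := by rw [Finset.sum_const]; ring
    _ ≤ ∑ v ∈ C, Gs.degree v := Finset.sum_le_sum (fun v hv => by
        rw [hGsdeg v hv]; exact hmin v hv)
    _ ≤ ∑ v, Gs.degree v := Finset.sum_le_sum_of_subset (Finset.subset_univ C)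
  -- internal edges of Gs are G-edges with both endpoints in C
  have hsub : Gs.edgeFinset ⊆ G.edgeFinset.filter (fun ed => ∀ x ∈ ed, x ∈ C) := by
    intro ed hed
    induction ed with
    | _ a b =>
      rw [SimpleGraph.mem_edgeFinset, SimpleGraph.mem_edgeSet] at hed
      rw [Finset.mem_filter, SimpleGraph.mem_edgeFinset, SimpleGraph.mem_edgeSet]
      refine ⟨hed.1, ?_⟩
      intro x hx
      rw [Sym2.mem_iff] at hx
      rcases hx with rfl | rfl
      · exact hed.2.1
      · exact hed.2.2
  -- distance to C strictly decreases along some edge from outside C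
  set dC : V → ℕ := fun v => C.inf' hC (fun c => G.dist v c) with hdC
  have hstep : ∀ v, v ∉ C → ∃ w, G.Adj v w ∧ dC w < dC v := by
    intro v hv
    obtain ⟨c₀, hc₀, hd₀⟩ := Finset.exists_mem_eq_inf' hC (fun c => G.dist v c)
    have hreach : G.Reachable v c₀ := hconn.preconnected v c₀
    have hpos : 0 < G.dist v c₀ := by
      rcases Nat.eq_zero_or_pos (G.dist v c₀) with h | h
      · exfalso
        have : v = c₀ := by
          rcases (SimpleGraph.dist_eq_zero_iff_eq_or_not_reachable).mp h with h' | h'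
          · exact h'
          · exact absurd hreach h'
        exact hv (this ▸ hc₀)
      · exact h
    obtain ⟨p, hp⟩ := hconn.exists_walk_length_eq_dist v c₀
    cases p with
    | nil => rw [SimpleGraph.Walk.length_nil] at hp; omega
    | @cons _ w _ h q =>
      refine ⟨w, h, ?_⟩
      have h1 : G.dist w c₀ ≤ q.length := SimpleGraph.dist_le q
      have h2 : dC w ≤ G.dist w c₀ := Finset.inf'_le _ hc₀
      have h3 : dC v = G.dist v c₀ := hd₀
      rw [SimpleGraph.Walk.length_cons] at hp
      omega
  choose wf hwf1 hwf2 using hstep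
  -- injection from V \ C into external edges
  have hout : (Finset.univ \ C).card ≤
      (G.edgeFinset.filter (fun ed => ¬ ∀ x ∈ ed, x ∈ C)).card := by
    refine Finset.card_le_card_of_injOn (s := Finset.univ \ C)
      (t := G.edgeFinset.filter (fun ed => ¬ ∀ x ∈ ed, x ∈ C))
      (fun v => if h : v ∈ C then s(v, v) else s(v, wf v h)) ?_ ?_
    · intro v hv
      simp only [Finset.mem_coe] at hv ⊢
      rw [Finset.mem_sdiff] at hv
      have hvC : v ∉ C := hv.2
      rw [dif_neg hvC, Finset.mem_filter]
      constructor
      · rw [SimpleGraph.mem_edgeFinset, SimpleGraph.mem_edgeSet]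
        exact hwf1 v hvC
      · intro hall
        exact hvC (hall v (by simp))
    · intro v1 hv1 v2 hv2 heq
      simp only [Finset.coe_sdiff, Finset.coe_univ, Set.mem_diff, Finset.mem_coe] at hv1 hv2
      have h1 : v1 ∉ C := hv1.2
      have h2 : v2 ∉ C := hv2.2
      dsimp only at heq
      rw [dif_neg h1, dif_neg h2] at heq
      rw [Sym2.eq_iff] at heq
      rcases heq with ⟨h, _⟩ | ⟨ha, hb⟩
      · exact h
      · exfalso
        have l1 := hwf2 v1 h1
        have l2 := hwf2 v2 h2
        rw [hb] at l1
        rw [← ha] at l2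
        omega
  -- combine
  have hpart : (G.edgeFinset.filter (fun ed => ∀ x ∈ ed, x ∈ C)).card +
      (G.edgeFinset.filter (fun ed => ¬ ∀ x ∈ ed, x ∈ C)).card = G.edgeFinset.card :=
    Finset.card_filter_add_card_filter_not _
  have hCcard : C.card ≤ Fintype.card V := by
    rw [← Finset.card_univ]; exact Finset.card_le_card (Finset.subset_univ C)
  have hsdiff : (Finset.univ \ C).card = Fintype.card V - C.card := by
    rw [Finset.card_sdiff_of_subset (Finset.subset_univ C), Finset.card_univ]
  have hsubc : Gs.edgeFinset.card ≤ (G.edgeFinset.filter (fun ed => ∀ x ∈ ed, x ∈ C)).card :=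
    Finset.card_le_card hsub
  omega

lemma greedy_embed {V : Type*} [Fintype V] [DecidableEq V]
    (G : SimpleGraph V) [DecidableRel G.Adj] {N c : ℕ} (hN : 0 < N)
    (R : SimpleGraph (Fin N)) [DecidableRel R.Adj]
    (hR : ∀ x : Fin N, ((Rᶜ).neighborFinset x).card ≤ c)
    (L : List V) (hnd : L.Nodup) (htf : L.toFinset = Finset.univ)
    (hord : ∀ (p q : List V) (v : V), L = p ++ v :: q →
      (G.neighborFinset v ∩ p.toFinset).card * c + p.length + 1 ≤ N) :
    R.ContainsCopy G := by
  classical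
  have key : ∀ i, i ≤ L.length → ∃ f : V → Fin N,
      Set.InjOn f (L.take i).toFinset ∧
      ∀ a ∈ (L.take i).toFinset, ∀ b ∈ (L.take i).toFinset,
        G.Adj a b → R.Adj (f a) (f b) := by
    intro i
    induction i with
    | zero => exact fun _ => ⟨fun _ => ⟨0, hN⟩, by simp, by simp⟩
    | succ i ih =>
      intro hi1
      have hi : i < L.length := hi1
      obtain ⟨f, hinj, hadj⟩ := ih (le_of_lt hi)
      set v := L.get ⟨i, hi⟩ with hv
      have hsplit : L = L.take i ++ v :: L.drop (i + 1) := by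
        conv_lhs => rw [← List.take_append_drop i L]
        congr 1
        rw [hv, List.drop_eq_getElem_cons hi, List.get_eq_getElem]
      set S := (L.take i).toFinset with hS
      have hlenp : (L.take i).length = i := by rw [List.length_take]; omega
      have hvS : v ∉ S := by
        have hnd2 := hnd
        rw [hsplit, List.nodup_append] at hnd2
        intro h
        exact hnd2.2.2 v (List.mem_toFinset.mp h) v List.mem_cons_self rfl
      set B := G.neighborFinset v ∩ S with hB
      have hcard : B.card * c + i + 1 ≤ N := by
        have := hord _ _ _ hsplit; rwa [hlenp] at this
      set A := (Finset.univ \ S.image f) \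
        B.biUnion (fun u => (Rᶜ).neighborFinset (f u)) with hA
      have hAne : A.Nonempty := by
        rw [← Finset.card_pos]
        have h1 : (Finset.univ : Finset (Fin N)).card ≤
            (Finset.univ \ S.image f).card + (S.image f).card :=
          Finset.card_le_card_sdiff_add_card
        have h2 : (Finset.univ \ S.image f).card ≤
            A.card + (B.biUnion (fun u => (Rᶜ).neighborFinset (f u))).card :=
          Finset.card_le_card_sdiff_add_card
        have h3 : (S.image f).card ≤ i := by
          refine le_trans Finset.card_image_le ?_
          rw [hS]
          exact le_trans (List.toFinset_card_le _) (le_of_eq hlenp)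
        have h4 : (B.biUnion (fun u => (Rᶜ).neighborFinset (f u))).card ≤ B.card * c := by
          refine le_trans Finset.card_biUnion_le ?_
          calc ∑ u ∈ B, ((Rᶜ).neighborFinset (f u)).card ≤ ∑ _u ∈ B, c :=
            Finset.sum_le_sum (fun u _ => hR (f u))
          _ = B.card * c := by rw [Finset.sum_const, smul_eq_mul]
        have h5 : (Finset.univ : Finset (Fin N)).card = N := by simp
        omega
      obtain ⟨a, ha⟩ := hAne
      rw [hA, Finset.mem_sdiff, Finset.mem_sdiff] at ha
      have haim : a ∉ S.image f := ha.1.2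
      have hadjB : ∀ u, u ∈ B → R.Adj (f u) a := by
        intro u hu
        have h1 : a ∉ (Rᶜ).neighborFinset (f u) := by
          intro h
          exact ha.2 (Finset.mem_biUnion.mpr ⟨u, hu, h⟩)
        have h2 : a ≠ f u := by
          intro h
          exact haim (h ▸ Finset.mem_image_of_mem f (Finset.mem_of_mem_inter_right hu))
        by_contra hR'
        exact h1 (by
          rw [SimpleGraph.mem_neighborFinset, SimpleGraph.compl_adj]
          exact ⟨fun h => h2 h.symm, hR'⟩)
      have hvi : L[i] = v := rfl
      have hins : (L.take (i + 1)).toFinset = insert v S := by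
        rw [List.take_succ, List.getElem?_eq_getElem hi]
        rw [hvi, hS]
        ext w
        simp [List.toFinset_append, or_comm]
      refine ⟨Function.update f v a, ?_, ?_⟩
      · rw [hins, Finset.coe_insert]
        intro x hx y hy hxy
        rcases Set.mem_insert_iff.mp hx with hx0 | hx'
        · rcases Set.mem_insert_iff.mp hy with hy0 | hy'
          · rw [hx0, hy0]
          · exfalso
            have hyv : y ≠ v := fun h => hvS (h ▸ hy')
            rw [hx0, Function.update_self, Function.update_of_ne hyv] at hxy
            exact haim (hxy ▸ Finset.mem_image_of_mem f hy')
        · rcases Set.mem_insert_iff.mp hy with hy0 | hy'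
          · exfalso
            have hxv : x ≠ v := fun h => hvS (h ▸ hx')
            rw [hy0, Function.update_self, Function.update_of_ne hxv] at hxy
            exact haim (hxy.symm ▸ Finset.mem_image_of_mem f hx')
          · have hxv : x ≠ v := fun h => hvS (h ▸ hx')
            have hyv : y ≠ v := fun h => hvS (h ▸ hy')
            rw [Function.update_of_ne hxv, Function.update_of_ne hyv] at hxy
            exact hinj (Finset.mem_coe.mpr hx') (Finset.mem_coe.mpr hy') hxy
      · intro x hx y hy hGxy
        rw [hins, Finset.mem_insert] at hx hy
        rcases hx with hx0 | hx'
        · rcases hy with hy0 | hy'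
          · exfalso; rw [hx0, hy0] at hGxy; exact absurd hGxy (G.loopless.irrefl v)
          · have hyv : y ≠ v := fun h => hvS (h ▸ hy')
            rw [hx0, Function.update_self, Function.update_of_ne hyv]
            refine (hadjB y ?_).symm
            rw [hB, Finset.mem_inter]
            rw [hx0] at hGxy
            exact ⟨(SimpleGraph.mem_neighborFinset _ _ _).mpr hGxy, hy'⟩
        · rcases hy with hy0 | hy'
          · have hxv : x ≠ v := fun h => hvS (h ▸ hx')
            rw [hy0, Function.update_self, Function.update_of_ne hxv]
            refine hadjB x ?_
            rw [hB, Finset.mem_inter]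
            rw [hy0] at hGxy
            exact ⟨(SimpleGraph.mem_neighborFinset _ _ _).mpr hGxy.symm, hx'⟩
          · have hxv : x ≠ v := fun h => hvS (h ▸ hx')
            have hyv : y ≠ v := fun h => hvS (h ▸ hy')
            rw [Function.update_of_ne hxv, Function.update_of_ne hyv]
            exact hadj x hx' y hy' hGxy
  obtain ⟨f, hinj, hadj⟩ := key L.length le_rfl
  rw [List.take_length, htf] at hinj hadj
  refine ⟨⟨f, fun x y hxy => hinj (by simp) (by simp) hxy⟩, fun a b hab => ?_⟩
  exact hadj a (Finset.mem_univ a) b (Finset.mem_univ b) hab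

/-- a connected graph on `n` vertices with at most `n(1 + 1/(2k+1))` edges
satisfies `r(G, K_{1,k}) ≤ n + 2k - 2`. -/
theorem stmt4 {V : Type*} [Fintype V] (G : SimpleGraph V) (n k : ℕ) (hk : 1 ≤ k)
    (hn : 1 ≤ n) (hcard : Fintype.card V = n) (hconn : G.Connected)
    (he : (G.edgeSet.ncard : ℚ) ≤ (n : ℚ) * (1 + 1 / (2 * (k : ℚ) + 1))) :
    ramseyNumber G (_root_.starGraph k) ≤ n + 2 * k - 2 := by
  classical
  have hN0 : 0 < n + 2 * k - 2 := by omega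
  rw [ramseyNumber]
  apply Nat.sInf_le
  refine ⟨hN0, ?_⟩
  intro R
  by_cases hstar : ∃ x : Fin (n + 2 * k - 2), k ≤ ((Rᶜ).neighborFinset x).card
  · right
    obtain ⟨x, hx⟩ := hstar
    obtain ⟨s, hs, hscard⟩ := Finset.exists_subset_card_eq hx
    set g : Fin k → Fin (n + 2 * k - 2) := fun j => (s.orderIsoOfFin hscard j : Fin (n + 2 * k - 2)) with hg
    have hgadj : ∀ j, (Rᶜ).Adj x (g j) := by
      intro j
      have hmem : g j ∈ (Rᶜ).neighborFinset x := hs (s.orderIsoOfFin hscard j).2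
      exact (SimpleGraph.mem_neighborFinset _ _ _).mp hmem
    refine ⟨⟨Sum.elim (fun _ => x) g, ?_⟩, ?_⟩
    · intro a b hab
      match a, b with
      | Sum.inl a, Sum.inl b => exact congrArg Sum.inl (Subsingleton.elim a b)
      | Sum.inl a, Sum.inr b =>
        exact absurd ((hgadj b).ne (by exact hab)) (by simp)
      | Sum.inr a, Sum.inl b =>
        exact absurd ((hgadj a).ne (by exact hab.symm)) (by simp)
      | Sum.inr a, Sum.inr b =>
        have h1 : s.orderIsoOfFin hscard a = s.orderIsoOfFin hscard b :=
          Subtype.ext (by exact hab)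
        exact congrArg Sum.inr ((s.orderIsoOfFin hscard).injective h1)
    · intro a b hab
      match a, b with
      | Sum.inl a, Sum.inl b => simp [_root_.starGraph, completeBipartiteGraph] at hab
      | Sum.inr a, Sum.inr b => simp [_root_.starGraph, completeBipartiteGraph] at hab
      | Sum.inl a, Sum.inr b => exact hgadj b
      | Sum.inr a, Sum.inl b => exact (hgadj a).symm
  · left
    push_neg at hstar
    have hR : ∀ x : Fin (n + 2 * k - 2), ((Rᶜ).neighborFinset x).card ≤ k - 1 := by
      intro x; have := hstar x; omega
    have hEq : G.edgeSet.ncard = G.edgeFinset.card := Set.ncard_eq_toFinset_card' _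
    have h2k : (0:ℚ) < 2 * (k:ℚ) + 1 := by positivity
    have hq : (G.edgeFinset.card : ℚ) * (2 * (k:ℚ) + 1) ≤ (n : ℚ) * (2 * (k:ℚ) + 2) := by
      have h := mul_le_mul_of_nonneg_right he h2k.le
      rw [hEq] at h
      calc (G.edgeFinset.card : ℚ) * (2 * (k:ℚ) + 1)
          ≤ (n:ℚ) * (1 + 1/(2 * (k:ℚ) + 1)) * (2 * (k:ℚ) + 1) := h
        _ = (n:ℚ) * (2 * (k:ℚ) + 2) := by
            rw [mul_assoc]
            congr 1
            field_simp
            ring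
    have hE : G.edgeFinset.card * (2 * k + 1) ≤ n * (2 * k + 2) := by exact_mod_cast hq
    obtain ⟨C, L, hnd, htf, hCs, hmin, hsplit2⟩ := peel_exists G Finset.univ
    have hLlen : L.length = n := by
      rw [← List.toFinset_card_of_nodup hnd, htf, Finset.card_univ, hcard]
    apply greedy_embed G hN0 R hR L hnd htf
    intro p q v hpq
    have hplen : p.length + 1 ≤ n := by
      have h := congrArg List.length hpq
      rw [hLlen] at h; simp at h; omega
    have hd : (G.neighborFinset v ∩ p.toFinset).card ≤ p.length :=
      le_trans (Finset.card_le_card Finset.inter_subset_right) (List.toFinset_card_le p)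
    by_cases hc : C.card ≤ p.length
    · have h2 := hsplit2 p q v hpq hc
      have h3 : (G.neighborFinset v ∩ p.toFinset).card * (k-1) ≤ 2 * (k-1) :=
        Nat.mul_le_mul_right _ h2
      omega
    · have hCne : C.Nonempty := Finset.card_pos.mp (by omega)
      have hcore := core_bound G hconn C hCne hmin
      rw [hcard] at hcore
      obtain ⟨c, rfl⟩ : ∃ c, k = c + 1 := ⟨k - 1, by omega⟩
      set d := (G.neighborFinset v ∩ p.toFinset).card with hdd
      set i := p.length with hii
      set m := C.card with hmm
      set e := G.edgeFinset.card with hee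
      have key1 : (2*c+3) * m ≤ 2 * n := by nlinarith [Nat.mul_le_mul_left (2*c+3) hcore, hE]
      have key2 : (2*c+3) * (i+1) ≤ 2*n :=
        le_trans (Nat.mul_le_mul_left _ (by omega : i + 1 ≤ m)) key1
      have key3 : c * i + c + i + 1 ≤ n := by nlinarith [key2]
      have key4 : d * c ≤ c * i := by
        rw [Nat.mul_comm]; exact Nat.mul_le_mul_left _ hd
      have goalx : d * c + i + 1 ≤ n + 2*c := by omega
      have hsimp1 : c + 1 - 1 = c := by omega
      have hsimp2 : n + 2 * (c+1) - 2 = n + 2*c := by omega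
      rw [hsimp1, hsimp2]
      exact goalx
end

section
/- Consider the complete bipartite graph K_{a,b} with a ≤ b, with parts X of size a and Y of size b, whose edges are colored red and blue. Then either there exists a red matching of size a, or for some 0 ≤ c ≤ a − 1 there exists a blue complete bipartite subgraph K_{c+1, b−c} whose part of size c+1 lies in X. -/
open SimpleGraph Finset

/-- in any red/blue colouring of `K_{a,b}` with `a ≤ b`, either there is a
red matching of size `a`, or for some `0 ≤ c ≤ a - 1` there is a blue `K_{c+1, b-c}`
with the part of size `c+1` inside `X`. -/
theorem stmt5 (a b : ℕ) (hab : a ≤ b) (red : Fin a → Fin b → Prop) :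
    (∃ f : Fin a ↪ Fin b, ∀ i : Fin a, red i (f i)) ∨
    (∃ c : ℕ, c ≤ a - 1 ∧ ∃ S : Finset (Fin a), ∃ T : Finset (Fin b),
      S.card = c + 1 ∧ T.card = b - c ∧ ∀ i ∈ S, ∀ j ∈ T, ¬ red i j) := by
  classical
  set t : Fin a → Finset (Fin b) := fun i => Finset.univ.filter (red i) with ht
  by_cases h : ∀ s : Finset (Fin a), s.card ≤ (s.biUnion t).card
  · obtain ⟨f, hf, hmem⟩ := (Finset.all_card_le_biUnion_card_iff_exists_injective t).mp h
    exact Or.inl ⟨⟨f, hf⟩, fun i => (Finset.mem_filter.mp (hmem i)).2⟩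
  · push_neg at h
    obtain ⟨s, hs⟩ := h
    right
    have hs1 : 1 ≤ s.card := by omega
    refine ⟨s.card - 1, ?_, s, ?_⟩
    · have := s.card_le_univ; simp at this; omega
    have hN : (s.biUnion t).card ≤ s.card - 1 := by omega
    have hT : b - (s.card - 1) ≤ (Finset.univ \ s.biUnion t).card := by
      rw [Finset.card_sdiff_of_subset (Finset.subset_univ _)]
      simp only [Finset.card_univ, Fintype.card_fin]
      omega
    obtain ⟨T, hTsub, hTcard⟩ := Finset.exists_subset_card_eq hT
    refine ⟨T, by omega, hTcard, fun i hi j hj hred => ?_⟩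
    have : j ∈ s.biUnion t := Finset.mem_biUnion.mpr ⟨i, hi, Finset.mem_filter.mpr ⟨Finset.mem_univ _, hred⟩⟩
    exact (Finset.mem_sdiff.mp (hTsub hj)).2 this
end

section
/- Let k ≥ 2 and n ≥ 6k^3, and let G be a connected graph with n vertices, at most n(1 + 1/(24k−12)) edges, and α'(G) = α' ≤ k − 1. Then r(G, K_{1,k}) ≥ n + k − 1 − α' − β, where β = 0 if k divides n + k − 2 − α' and β = 1 otherwise. -/
open SimpleGraph Finset

private lemma div_eq_iff' {c : ℕ} (hc : 0 < c) (x j : ℕ) :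
    x / c = j ↔ j * c ≤ x ∧ x < j * c + c := by
  constructor
  · rintro rfl
    have h1 : x % c < c := Nat.mod_lt x hc
    have h2 : x / c * c + x % c = x := Nat.div_add_mod' x c
    omega
  · rintro ⟨h1, h2⟩
    exact Nat.div_eq_of_lt_le h1 (by rw [add_one_mul]; omega)

/-- block function: first `d` blocks of size `k`, then blocks of size `c`. -/
private def bfun (k c d : ℕ) (x : ℕ) : ℕ :=
  if x < d * k then x / k else d + (x - d * k) / c

private lemma bfun_fiberA {k c d e N : ℕ} (hk : 0 < k) (hN : N = d * k + e * c)
    {j : ℕ} (hj : j < d) :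
    ((range N).filter fun x => bfun k c d x = j) = Ico (j * k) (j * k + k) := by
  ext x
  rw [Finset.mem_filter, Finset.mem_range, Finset.mem_Ico]; simp only [bfun]
  constructor
  · rintro ⟨hxN, hg⟩
    by_cases hlt : x < d * k
    · rw [if_pos hlt] at hg
      exact (div_eq_iff' hk x j).mp hg
    · rw [if_neg hlt] at hg
      have hdle : d ≤ j := hg ▸ Nat.le_add_right d _
      omega
  · rintro ⟨h1, h2⟩
    have hjk : j * k + k = (j + 1) * k := by ring
    have hdk : (j + 1) * k ≤ d * k := Nat.mul_le_mul_right k (by omega)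
    have hxdk : x < d * k := by omega
    refine ⟨by omega, ?_⟩
    rw [if_pos hxdk]
    exact (div_eq_iff' hk x j).mpr ⟨h1, h2⟩

private lemma bfun_fiberB {k c d e N : ℕ} (hk : 0 < k) (hc : 0 < c) (hN : N = d * k + e * c)
    {t : ℕ} (ht : t < e) :
    ((range N).filter fun x => bfun k c d x = d + t)
      = Ico (d * k + t * c) (d * k + t * c + c) := by
  ext x
  rw [Finset.mem_filter, Finset.mem_range, Finset.mem_Ico]; simp only [bfun]
  constructor
  · rintro ⟨hxN, hg⟩
    by_cases hlt : x < d * k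
    · rw [if_pos hlt] at hg
      have h3 := (div_eq_iff' hk x (d + t)).mp hg
      have h4 : d * k ≤ (d + t) * k := Nat.mul_le_mul_right k (by omega)
      omega
    · rw [if_neg hlt] at hg
      have hg' : (x - d * k) / c = t := by omega
      have h3 := (div_eq_iff' hc (x - d * k) t).mp hg'
      omega
  · rintro ⟨h1, h2⟩
    have hxdk : ¬ x < d * k := by omega
    have h5 : t * c + c = (t + 1) * c := by ring
    have h4 : (t + 1) * c ≤ e * c := Nat.mul_le_mul_right c (by omega)
    refine ⟨by omega, ?_⟩
    rw [if_neg hxdk]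
    have h6 : (x - d * k) / c = t := (div_eq_iff' hc _ t).mpr (by omega)
    omega

private lemma bfun_fiber_empty {k c d e N : ℕ} (hk : 0 < k) (hc : 0 < c) (hN : N = d * k + e * c)
    {j : ℕ} (hj : d + e ≤ j) :
    ((range N).filter fun x => bfun k c d x = j) = ∅ := by
  rw [Finset.filter_eq_empty_iff]
  intro x hx
  rw [mem_range] at hx
  by_cases hlt : x < d * k
  · rw [bfun, if_pos hlt]
    rintro rfl
    have h1 : x / k * k ≤ x := Nat.div_mul_le_self x k
    have h2 : d * k ≤ x / k * k := Nat.mul_le_mul_right k (by omega)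
    omega
  · rw [bfun, if_neg hlt]
    intro hgj
    have h0 : (x - d * k) / c = j - d := by omega
    have h3 := (div_eq_iff' hc _ (j - d)).mp h0
    have h4 : e * c ≤ (j - d) * c := Nat.mul_le_mul_right c (by omega)
    omega

private lemma bfun_card_le {k c d e N : ℕ} (hk : 0 < k) (hc : 0 < c) (hck : c ≤ k)
    (hN : N = d * k + e * c) (j : ℕ) :
    ((range N).filter fun x => bfun k c d x = j).card ≤ k := by
  rcases lt_or_ge j d with hj | hj
  · rw [bfun_fiberA hk hN hj, Nat.card_Ico]; omega
  · rcases lt_or_ge j (d + e) with hj2 | hj2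
    · have hjt : j = d + (j - d) := by omega
      rw [hjt, bfun_fiberB hk hc hN (by omega : j - d < e), Nat.card_Ico]; omega
    · rw [bfun_fiber_empty hk hc hN hj2]; simp

private lemma bfun_lt_and_card_ge {k c d e N : ℕ} (hk : 0 < k) (hc : 0 < c) (hck : c ≤ k)
    (hN : N = d * k + e * c) {x : ℕ} (hx : x < N) :
    bfun k c d x < N ∧ c ≤ ((range N).filter fun y => bfun k c d y = bfun k c d x).card := by
  have hde : d + e ≤ N := by
    have h1 : d * 1 ≤ d * k := Nat.mul_le_mul_left d hk
    have h2 : e * 1 ≤ e * c := Nat.mul_le_mul_left e hc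
    omega
  by_cases hlt : x < d * k
  · have hgx : bfun k c d x = x / k := if_pos hlt
    have h1 := (div_eq_iff' hk x (x / k)).mp rfl
    have hxd : x / k < d := by
      by_contra hcon
      have : d * k ≤ x / k * k := Nat.mul_le_mul_right k (by omega)
      omega
    constructor
    · omega
    · rw [hgx, bfun_fiberA hk hN hxd, Nat.card_Ico, Nat.add_sub_cancel_left]
      exact hck
  · have hgx : bfun k c d x = d + (x - d * k) / c := if_neg hlt
    set t := (x - d * k) / c with htdef
    have h1 := (div_eq_iff' hc (x - d * k) t).mp rfl
    have hte : t < e := by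
      by_contra hcon
      have : e * c ≤ t * c := Nat.mul_le_mul_right c (by omega)
      omega
    constructor
    · omega
    · rw [hgx, bfun_fiberB hk hc hN hte, Nat.card_Ico, Nat.add_sub_cancel_left]

private lemma construction {V : Type*} [Fintype V] (G : SimpleGraph V) (k c d e N α' : ℕ)
    (hk : 2 ≤ k) (hc : 0 < c) (hck : c ≤ k) (hN : N = d * k + e * c)
    (v : V)
    (hv : ∀ I : Finset V, v ∈ I → (∀ a ∈ I, ∀ b ∈ I, a ≠ b → ¬ G.Adj a b) → I.card ≤ α' + 1)
    (hn : N + α' + 2 ≤ Fintype.card V + c) :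
    ∃ R : SimpleGraph (Fin N), ¬ R.ContainsCopy G ∧ ¬ Rᶜ.ContainsCopy (_root_.starGraph k) := by
  classical
  have hkpos : 0 < k := by omega
  set g : ℕ → ℕ := bfun k c d with hg
  refine ⟨⟨fun a b => g a.val ≠ g b.val, ⟨fun a b h => Ne.symm h⟩, ⟨fun a h => h rfl⟩⟩, ?_, ?_⟩
  · rintro ⟨f, hf⟩
    set j0 := g (f v).val with hj0
    have hglt : ∀ x : Fin N, g x.val < N ∧
        c ≤ ((range N).filter fun y => g y = g x.val).card :=
      fun x => bfun_lt_and_card_ge hkpos hc hck hN x.isLt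
    have hcard1 : (univ : Finset V).card =
        ∑ j ∈ range N, (univ.filter fun u => g (f u).val = j).card :=
      Finset.card_eq_sum_card_fiberwise (fun u _ => mem_range.mpr (hglt (f u)).1)
    have hle : ∀ j ∈ range N, (univ.filter fun u => g (f u).val = j).card ≤
        (if j = j0 then α' + 1 else ((range N).filter fun y => g y = j).card) := by
      intro j hj
      by_cases hjj : j = j0
      · rw [if_pos hjj]
        apply hv
        · rw [mem_filter]
          exact ⟨mem_univ v, by rw [hjj]⟩
        · intro a ha b hb hab hadj
          have h2 := hf hadj
          rw [mem_filter] at ha hb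
          exact h2 (ha.2.trans hb.2.symm)
      · rw [if_neg hjj]
        apply Finset.card_le_card_of_injOn (fun u => (f u).val)
        · intro u hu
          rw [Finset.mem_coe, mem_filter] at hu ⊢
          exact ⟨mem_range.mpr (f u).isLt, hu.2⟩
        · intro a _ b _ hab
          exact f.injective (Fin.val_injective hab)
    have hj0mem : j0 ∈ range N := mem_range.mpr (hglt (f v)).1
    have hsplitI : (univ.filter fun u => g (f u).val = j0).card +
        ∑ j ∈ (range N).erase j0, (univ.filter fun u => g (f u).val = j).card =
        ∑ j ∈ range N, (univ.filter fun u => g (f u).val = j).card :=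
      Finset.add_sum_erase _ (fun j => (univ.filter fun u => g (f u).val = j).card) hj0mem
    have hsplitF : ((range N).filter fun y => g y = j0).card +
        ∑ j ∈ (range N).erase j0, ((range N).filter fun y => g y = j).card =
        ∑ j ∈ range N, ((range N).filter fun y => g y = j).card :=
      Finset.add_sum_erase _ (fun j => ((range N).filter fun y => g y = j).card) hj0mem
    have hIj0 : (univ.filter fun u => g (f u).val = j0).card ≤ α' + 1 := by
      have := hle j0 hj0mem
      rwa [if_pos rfl] at this
    have hrest : ∑ j ∈ (range N).erase j0, (univ.filter fun u => g (f u).val = j).card ≤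
        ∑ j ∈ (range N).erase j0, ((range N).filter fun y => g y = j).card := by
      refine Finset.sum_le_sum (fun j hj => ?_)
      have := hle j (Finset.mem_of_mem_erase hj)
      rwa [if_neg (Finset.ne_of_mem_erase hj)] at this
    have htot : (range N).card = ∑ j ∈ range N, ((range N).filter fun y => g y = j).card :=
      Finset.card_eq_sum_card_fiberwise (fun x hx =>
        mem_range.mpr (bfun_lt_and_card_ge hkpos hc hck hN (mem_range.mp hx)).1)
    have hcge : c ≤ ((range N).filter fun y => g y = j0).card := (hglt (f v)).2
    have hcards : (univ : Finset V).card = Fintype.card V := Finset.card_univ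
    rw [card_range] at htot
    omega
  · rintro ⟨f, hf⟩
    set z := f (Sum.inl 0) with hz
    have hadj : ∀ i : Fin k, z ≠ f (Sum.inr i) ∧ g (f (Sum.inr i)).val = g z.val := by
      intro i
      have hst : (_root_.starGraph k).Adj (Sum.inl 0) (Sum.inr i) := by simp [_root_.starGraph]
      have h2 := hf hst
      rw [SimpleGraph.compl_adj] at h2
      refine ⟨h2.1, ?_⟩
      have h3 := h2.2
      simp only [not_ne_iff] at h3
      exact h3.symm
    have hmemz : z.val ∈ (range N).filter fun y => g y = g z.val := by
      rw [mem_filter]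
      exact ⟨mem_range.mpr z.isLt, rfl⟩
    have hinj : (univ : Finset (Fin k)).card ≤
        (((range N).filter fun y => g y = g z.val).erase z.val).card := by
      apply Finset.card_le_card_of_injOn (fun i => (f (Sum.inr i)).val)
      · intro i _
        rw [Finset.mem_coe, mem_erase, mem_filter]
        refine ⟨fun h => (hadj i).1 (Fin.val_injective h).symm, mem_range.mpr (f _).isLt, (hadj i).2⟩
      · intro a _ b _ hab
        have := f.injective (Fin.val_injective hab)
        exact Sum.inr.inj this
    rw [card_univ, Fintype.card_fin] at hinj
    rw [Finset.card_erase_of_mem hmemz] at hinj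
    have hfle : ((range N).filter fun y => g y = g z.val).card ≤ k :=
      bfun_card_le hkpos hc hck hN (g z.val)
    have hpos : 0 < ((range N).filter fun y => g y = g z.val).card := card_pos.mpr ⟨z.val, hmemz⟩
    omega

private lemma ramsey_upward {V W : Type*} (G : SimpleGraph V) (H : SimpleGraph W) {x y : ℕ}
    (hxy : x ≤ y)
    (hx : x ∈ {N | 0 < N ∧ ∀ R : SimpleGraph (Fin N), R.ContainsCopy G ∨ Rᶜ.ContainsCopy H}) :
    y ∈ {N | 0 < N ∧ ∀ R : SimpleGraph (Fin N), R.ContainsCopy G ∨ Rᶜ.ContainsCopy H} := by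
  obtain ⟨hpos, hx⟩ := hx
  refine ⟨hpos.trans_le hxy, fun R => ?_⟩
  set e : Fin x ↪ Fin y := Fin.castLEEmb hxy with he
  rcases hx (R.comap e) with ⟨f, hf⟩ | ⟨f, hf⟩
  · exact Or.inl ⟨f.trans e, fun a b h => hf h⟩
  · refine Or.inr ⟨f.trans e, fun a b h => ?_⟩
    have h2 := hf h
    rw [SimpleGraph.compl_adj] at h2 ⊢
    exact ⟨fun hh => h2.1 (e.injective hh), h2.2⟩

private lemma ramsey_nonempty {V : Type*} [Fintype V] (G : SimpleGraph V) (n k : ℕ)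
    (hcard : Fintype.card V = n) (hk : 1 ≤ k) :
    (n * k + 1) ∈ {N | 0 < N ∧ ∀ R : SimpleGraph (Fin N),
      R.ContainsCopy G ∨ Rᶜ.ContainsCopy (_root_.starGraph k)} := by
  classical
  refine ⟨Nat.succ_pos _, fun R => ?_⟩
  by_cases hstar : ∃ z : Fin (n * k + 1),
      k ≤ (univ.filter fun y => z ≠ y ∧ ¬ R.Adj z y).card
  · right
    obtain ⟨z, hz⟩ := hstar
    obtain ⟨t, hts, htk⟩ := Finset.exists_subset_card_eq hz
    set e := t.equivFinOfCardEq htk with he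
    have hmem : ∀ i : Fin k, z ≠ ↑(e.symm i) ∧ ¬ R.Adj z ↑(e.symm i) := by
      intro i
      have := hts (e.symm i).2
      rw [mem_filter] at this
      exact this.2
    have hinj : Function.Injective
        (Sum.elim (fun _ : Fin 1 => z) (fun i : Fin k => ↑(e.symm i))) := by
      rintro (a | a) (b | b) h
      · exact congrArg _ (Subsingleton.elim a b)
      · exact absurd (h : z = ↑(e.symm b)) (hmem b).1
      · exact absurd ((h : (↑(e.symm a) : Fin (n*k+1)) = z).symm) (hmem a).1
      · have : e.symm a = e.symm b := Subtype.val_injective (h : (↑(e.symm a) : Fin (n*k+1)) = ↑(e.symm b))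
        exact congrArg _ (e.symm.injective this)
    refine ⟨⟨_, hinj⟩, ?_⟩
    intro a b hadj
    have hcba : ∀ (i : Fin k), Rᶜ.Adj z ↑(e.symm i) := by
      intro i
      rw [SimpleGraph.compl_adj]
      exact hmem i
    rcases a with a | a <;> rcases b with b | b <;>
      simp only [_root_.starGraph, completeBipartiteGraph_adj, Sum.isLeft_inl, Sum.isRight_inr,
        Sum.isLeft_inr, Sum.isRight_inl] at hadj
    · simp at hadj
    · exact hcba b
    · exact (hcba a).symm
    · simp at hadj
  · left
    push_neg at hstar
    have hcl : ∀ j, j ≤ n → ∃ t : Finset (Fin (n * k + 1)), t.card = j ∧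
        ∀ a ∈ t, ∀ b ∈ t, a ≠ b → R.Adj a b := by
      intro j
      induction j with
      | zero => exact fun _ => ⟨∅, rfl, by simp⟩
      | succ m ih =>
        intro hm
        obtain ⟨t, htc, ht⟩ := ih (by omega)
        set B := t.biUnion
          (fun z => insert z (univ.filter fun y => z ≠ y ∧ ¬ R.Adj z y)) with hB
        have hBcard : B.card ≤ m * k := by
          calc B.card ≤ ∑ z ∈ t, (insert z (univ.filter fun y => z ≠ y ∧ ¬ R.Adj z y)).card :=
                Finset.card_biUnion_le
            _ ≤ ∑ _z ∈ t, k := Finset.sum_le_sum (fun z _ => by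
                have h1 := hstar z
                have h2 := Finset.card_insert_le z (univ.filter fun y => z ≠ y ∧ ¬ R.Adj z y)
                omega)
            _ = m * k := by rw [Finset.sum_const, htc, smul_eq_mul]
        have hex : ∃ w : Fin (n * k + 1), w ∉ B := by
          by_contra hc
          push_neg at hc
          have hsub : (univ : Finset (Fin (n * k + 1))) ⊆ B := fun x _ => hc x
          have hcard2 := Finset.card_le_card hsub
          rw [card_univ, Fintype.card_fin] at hcard2
          have : m * k ≤ n * k := Nat.mul_le_mul_right k (by omega)
          omega
        obtain ⟨w, hw⟩ := hex
        have hwt : ∀ z ∈ t, z ≠ w ∧ R.Adj z w := by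
          intro z hzt
          have hnm : w ∉ insert z (univ.filter fun y => z ≠ y ∧ ¬ R.Adj z y) :=
            fun hmem => hw (Finset.mem_biUnion.mpr ⟨z, hzt, hmem⟩)
          rw [Finset.mem_insert, mem_filter] at hnm
          push_neg at hnm
          obtain ⟨h1, h2⟩ := hnm
          exact ⟨fun hzw => h1 hzw.symm, h2 (mem_univ w) (fun hzw => h1 hzw.symm)⟩
        refine ⟨insert w t, ?_, ?_⟩
        · rw [Finset.card_insert_of_notMem (fun hwt' => (hwt w hwt').1 rfl), htc]
        · intro a ha b hb hab
          rcases Finset.mem_insert.mp ha with rfl | ha' <;>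
            rcases Finset.mem_insert.mp hb with rfl | hb'
          · exact absurd rfl hab
          · exact ((hwt b hb').2).symm
          · exact (hwt a ha').2
          · exact ht a ha' b hb' hab
    obtain ⟨t, htc, ht⟩ := hcl n le_rfl
    have e : V ≃ ↥t := by
      apply Fintype.equivOfCardEq
      rw [Fintype.card_coe, htc, hcard]
    refine ⟨⟨fun u => ↑(e u), fun a b h => e.injective (Subtype.val_injective h)⟩, ?_⟩
    intro a b hadj
    refine ht _ (e a).2 _ (e b).2 (fun hh => G.ne_of_adj hadj ?_)
    exact e.injective (Subtype.val_injective hh)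

/-- lower bound of the main theorem:
`r(G, K_{1,k}) ≥ n + k - 1 - α' - β`, with `β = 0` if `k ∣ n + k - 2 - α'`, else `β = 1`. -/
theorem stmt7 {V : Type*} [Fintype V] (G : SimpleGraph V) (n k : ℕ) (hk : 2 ≤ k)
    (hn : 6 * k ^ 3 ≤ n) (hcard : Fintype.card V = n) (hconn : G.Connected)
    (he : (G.edgeSet.ncard : ℚ) ≤ (n : ℚ) * (1 + 1 / (24 * (k : ℚ) - 12)))
    (hα : alphaPrime G ≤ k - 1) :
    n + k - 1 - alphaPrime G -
        (if k ∣ (n + k - 2 - alphaPrime G) then 0 else 1) ≤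
      ramseyNumber G (_root_.starGraph k) := by
  classical
  have hk3 : 8 ≤ k ^ 3 := by
    calc (8 : ℕ) = 2 ^ 3 := by norm_num
      _ ≤ k ^ 3 := Nat.pow_le_pow_left hk 3
  have hn48 : 48 ≤ n := by omega
  set α' := alphaPrime G with hα'def
  have hα'k : α' + 1 ≤ k := by omega
  have hVpos : 0 < Fintype.card V := by omega
  obtain ⟨v0⟩ : Nonempty V := Fintype.card_pos_iff.mp hVpos
  have hmemset : alphaPrime G ∈ {m | ∃ v : V, m = _root_.indepNum (G.induce (G.delNbhd v))} :=
    Nat.sInf_mem ⟨_, v0, rfl⟩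
  obtain ⟨v, hv0⟩ := hmemset
  -- key property of v
  have hv : ∀ I : Finset V, v ∈ I → (∀ a ∈ I, ∀ b ∈ I, a ≠ b → ¬ G.Adj a b) →
      I.card ≤ α' + 1 := by
    intro I hvI hI
    have h1 : (I.erase v).card ≤ α' := by
      rw [hα'def, hv0]
      apply le_csSup
      · refine ⟨Nat.card ↥(G.delNbhd v), ?_⟩
        rintro m ⟨s, _, rfl⟩
        calc s.ncard ≤ (Set.univ : Set ↥(G.delNbhd v)).ncard :=
              Set.ncard_le_ncard (Set.subset_univ s) Set.finite_univ
          _ = Nat.card ↥(G.delNbhd v) := Set.ncard_univ _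
      · refine ⟨{u : ↥(G.delNbhd v) | ↑u ∈ I}, ?_, ?_⟩
        · intro a ha b hb hab hadj
          have hadj' : G.Adj ↑a ↑b := hadj
          exact hI _ ha _ hb (fun hh => hab (Subtype.val_injective hh)) hadj'
        · have himg : Subtype.val '' {u : ↥(G.delNbhd v) | ↑u ∈ I} = ↑(I.erase v) := by
            ext x
            simp only [Set.mem_image, Set.mem_setOf_eq, coe_erase, Set.mem_diff, mem_coe,
              Set.mem_singleton_iff]
            constructor
            · rintro ⟨⟨y, hy⟩, hyI, rfl⟩
              exact ⟨hyI, hy.1⟩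
            · rintro ⟨hxI, hxv⟩
              exact ⟨⟨x, ⟨hxv, fun h => hI v hvI x hxI (Ne.symm hxv) h⟩⟩, hxI, rfl⟩
          calc ({u : ↥(G.delNbhd v) | ↑u ∈ I}).ncard
              = (Subtype.val '' {u : ↥(G.delNbhd v) | ↑u ∈ I}).ncard :=
                (Set.ncard_image_of_injective _ Subtype.val_injective).symm
            _ = (I.erase v).card := by rw [himg, Set.ncard_coe_finset]
    have h2 : (I.erase v).card = I.card - 1 := Finset.card_erase_of_mem hvI
    have h3 : 0 < I.card := Finset.card_pos.mpr ⟨v, hvI⟩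
    omega
  -- main bound for a given β
  have key : ∀ β : ℕ, β ≤ 1 → (β = 0 → k ∣ (n + k - 2 - α')) →
      n + k - 1 - α' - β ≤ ramseyNumber G (_root_.starGraph k) := by
    intro β hβ hβ0
    set N := n + k - 2 - α' - β with hNdef
    have hNval : N + α' + β + 2 = n + k := by omega
    obtain ⟨c, d, e, hc, hck, hNe, hcβ⟩ :
        ∃ c d e : ℕ, 0 < c ∧ c ≤ k ∧ N = d * k + e * c ∧ c = k - β := by
      interval_cases β
      · obtain ⟨e, he'⟩ := hβ0 rfl
        refine ⟨k, 0, e, by omega, le_refl k, ?_, by omega⟩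
        have hNke : N = k * e := by omega
        rw [hNke]; ring
      · have hk1' : 1 ≤ k - 1 := by omega
        set q := N / (k - 1) with hq
        set d := N % (k - 1) with hd
        have hqd : q * (k - 1) + d = N := Nat.div_add_mod' N (k - 1)
        have hdlt : d < k - 1 := Nat.mod_lt N (by omega)
        have hkk : k * k ≤ k ^ 3 := by
          calc k * k = k ^ 2 := (sq k).symm
            _ ≤ k ^ 3 := Nat.pow_le_pow_right (by omega) (by omega)
        have hksub : (k - 1) * (k - 1) ≤ k * k :=
          Nat.mul_le_mul (Nat.sub_le k 1) (Nat.sub_le k 1)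
        have hNk2 : (k - 1) * (k - 1) ≤ N := by omega
        have hdq : d ≤ q := by
          have hq2 : (k - 1) ≤ q := (Nat.le_div_iff_mul_le (by omega)).mpr hNk2
          omega
        refine ⟨k - 1, d, q - d, by omega, by omega, ?_, rfl⟩
        have h1 : d * k = d * (k - 1) + d := by
          have h0 : d * ((k - 1) + 1) = d * (k - 1) + d * 1 := by ring
          rw [show (k - 1) + 1 = k by omega] at h0
          omega
        have h2 : (q - d) * (k - 1) = q * (k - 1) - d * (k - 1) := Nat.sub_mul q d (k - 1)
        have h3 : d * (k - 1) ≤ q * (k - 1) := Nat.mul_le_mul_right _ hdq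
        omega
    obtain ⟨R, hR1, hR2⟩ := construction G k c d e N α' hk hc hck hNe v hv
      (by rw [hcard]; omega)
    have hS0 := ramsey_nonempty G n k hcard (by omega)
    rw [ramseyNumber]
    have hinf := Nat.sInf_mem (Set.nonempty_of_mem hS0)
    by_contra hcon
    push_neg at hcon
    have hle : sInf {N | 0 < N ∧ ∀ R : SimpleGraph (Fin N),
        R.ContainsCopy G ∨ Rᶜ.ContainsCopy (_root_.starGraph k)} ≤ N := by omega
    have hNS := ramsey_upward G (_root_.starGraph k) hle hinf
    rcases hNS.2 R with h | h
    · exact hR1 h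
    · exact hR2 h
  by_cases hdvd : k ∣ (n + k - 2 - α')
  · rw [if_pos hdvd]
    exact key 0 (by omega) (fun _ => hdvd)
  · rw [if_neg hdvd]
    exact key 1 (by omega) (fun h => by omega)
end

section
/- Let G be a connected graph with n vertices and at most n(1 + 1/(24k−12)) edges, where k ≥ 1 and n ≥ 120k^2 − 180k + 60. If the maximum degree satisfies Δ(G) < n(1 − 1/(24k−12)), then α'(G) ≥ k − 1. -/
open SimpleGraph Finset

private lemma cw_sum {V : Type*} [DecidableEq V] (G : SimpleGraph V) [DecidableRel G.Adj]
    (s : Finset V) : ∃ t, t ⊆ s ∧ (∀ a ∈ t, ∀ b ∈ t, ¬ G.Adj a b) ∧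
      ∑ w ∈ s, (1 : ℝ)/(#(s.filter (G.Adj w)) + 1) ≤ #t := by
  induction s using Finset.strongInduction with
  | _ s ih =>
    rcases s.eq_empty_or_nonempty with rfl | hne
    · exact ⟨∅, by simp⟩
    obtain ⟨u, hu, hmin⟩ := Finset.exists_min_image s (fun w => #(s.filter (G.Adj w))) hne
    set Nu := insert u (s.filter (G.Adj u)) with hNud
    have hNus : Nu ⊆ s := Finset.insert_subset hu (Finset.filter_subset _ _)
    have hss : s \ Nu ⊂ s := Finset.sdiff_ssubset hNus (Finset.insert_nonempty _ _)
    obtain ⟨t, hts, hind, hsum⟩ := ih _ hss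
    have hut : u ∉ t := fun h => (Finset.mem_sdiff.1 (hts h)).2 (Finset.mem_insert_self _ _)
    have hnadj : ∀ b ∈ t, ¬ G.Adj u b := by
      intro b hb hadj
      exact (Finset.mem_sdiff.1 (hts hb)).2
        (Finset.mem_insert_of_mem (Finset.mem_filter.2 ⟨(Finset.mem_sdiff.1 (hts hb)).1, hadj⟩))
    refine ⟨insert u t, Finset.insert_subset hu (hts.trans Finset.sdiff_subset), ?_, ?_⟩
    · intro a ha b hb hadj
      rcases Finset.mem_insert.1 ha with ha' | ha'
      · subst ha'
        rcases Finset.mem_insert.1 hb with hb' | hb'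
        · subst hb'; exact G.loopless.irrefl _ hadj
        · exact hnadj b hb' hadj
      · rcases Finset.mem_insert.1 hb with hb' | hb'
        · subst hb'; exact hnadj a ha' hadj.symm
        · exact hind a ha' b hb' hadj
    · have hsplit : ∑ w ∈ s \ Nu, (1 : ℝ)/(#(s.filter (G.Adj w)) + 1)
          + ∑ w ∈ Nu, (1 : ℝ)/(#(s.filter (G.Adj w)) + 1)
          = ∑ w ∈ s, (1 : ℝ)/(#(s.filter (G.Adj w)) + 1) := Finset.sum_sdiff hNus
      have h1 : ∑ w ∈ s \ Nu, (1 : ℝ)/(#(s.filter (G.Adj w)) + 1)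
          ≤ ∑ w ∈ s \ Nu, (1 : ℝ)/(#((s \ Nu).filter (G.Adj w)) + 1) := by
        apply Finset.sum_le_sum
        intro i _
        apply one_div_le_one_div_of_le (by positivity)
        have hsub : (s \ Nu).filter (G.Adj i) ⊆ s.filter (G.Adj i) :=
          Finset.filter_subset_filter _ Finset.sdiff_subset
        have := Finset.card_le_card hsub
        exact_mod_cast Nat.add_le_add_right this 1
      have hNucard : (#Nu : ℝ) = #(s.filter (G.Adj u)) + 1 := by
        rw [hNud, Finset.card_insert_of_notMem (by simp)]
        push_cast; ring
      have h2 : ∑ w ∈ Nu, (1 : ℝ)/(#(s.filter (G.Adj w)) + 1) ≤ 1 := by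
        calc ∑ w ∈ Nu, (1 : ℝ)/(#(s.filter (G.Adj w)) + 1)
            ≤ ∑ _w ∈ Nu, (1 : ℝ)/(#(s.filter (G.Adj u)) + 1) := by
              apply Finset.sum_le_sum
              intro i hi
              exact one_div_le_one_div_of_le (by positivity)
                (by exact_mod_cast Nat.add_le_add_right (hmin i (hNus hi)) 1)
          _ = (#Nu : ℝ) * ((1:ℝ)/(#(s.filter (G.Adj u)) + 1)) := by
              rw [Finset.sum_const, nsmul_eq_mul]
          _ = 1 := by rw [hNucard]; field_simp
      rw [Finset.card_insert_of_notMem hut]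
      push_cast
      linarith [h1.trans hsum]

private lemma cw_ratio {V : Type*} [DecidableEq V] (G : SimpleGraph V) [DecidableRel G.Adj]
    (s : Finset V) : ∃ t, t ⊆ s ∧ (∀ a ∈ t, ∀ b ∈ t, ¬ G.Adj a b) ∧
      (#s) ^ 2 ≤ #t * (#s + ∑ w ∈ s, #(s.filter (G.Adj w))) := by
  obtain ⟨t, hts, hind, hsum⟩ := cw_sum G s
  refine ⟨t, hts, hind, ?_⟩
  set x : V → ℝ := fun w => (#(s.filter (G.Adj w)) : ℝ) + 1 with hx
  have hxpos : ∀ w, 0 < x w := fun w => by positivity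
  have hCS : ((#s : ℝ)) ^ 2 ≤ (∑ w ∈ s, (x w)⁻¹) * (∑ w ∈ s, x w) := by
    have hcs := Finset.sum_mul_sq_le_sq_mul_sq s (fun w => Real.sqrt (x w)⁻¹)
      (fun w => Real.sqrt (x w))
    have h1 : ∀ w ∈ s, Real.sqrt (x w)⁻¹ * Real.sqrt (x w) = 1 := fun w _ => by
      rw [Real.sqrt_inv]
      exact inv_mul_cancel₀ (ne_of_gt (Real.sqrt_pos.2 (hxpos w)))
    have h2 : ∀ w ∈ s, (Real.sqrt (x w)⁻¹) ^ 2 = (x w)⁻¹ := fun w _ => by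
      rw [Real.sqrt_inv, inv_pow, Real.sq_sqrt (hxpos w).le]
    have h3 : ∀ w ∈ s, (Real.sqrt (x w)) ^ 2 = x w := fun w _ => Real.sq_sqrt (hxpos w).le
    rw [Finset.sum_congr rfl h1, Finset.sum_congr rfl h2, Finset.sum_congr rfl h3] at hcs
    simpa using hcs
  have hsum' : ∑ w ∈ s, (x w)⁻¹ ≤ (#t : ℝ) := by
    simpa [hx, one_div] using hsum
  have hxsum : ∑ w ∈ s, x w = (#s : ℝ) + ∑ w ∈ s, (#(s.filter (G.Adj w)) : ℝ) := by
    simp [hx, Finset.sum_add_distrib, add_comm]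
  have hfin : ((#s : ℝ)) ^ 2 ≤ (#t : ℝ) * ((#s : ℝ) + ∑ w ∈ s, (#(s.filter (G.Adj w)) : ℝ)) := by
    calc ((#s : ℝ)) ^ 2 ≤ (∑ w ∈ s, (x w)⁻¹) * (∑ w ∈ s, x w) := hCS
      _ ≤ (#t : ℝ) * (∑ w ∈ s, x w) := by
          apply mul_le_mul_of_nonneg_right hsum'
          exact Finset.sum_nonneg fun w _ => (hxpos w).le
      _ = _ := by rw [hxsum]
  exact_mod_cast hfin

private lemma cross_aux {V : Type*} (G : SimpleGraph V) (v : V) :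
    ∀ (u z : V) (_p : G.Walk u z), z = v → u ≠ v → ¬ G.Adj v u →
      ∃ w w', w ≠ v ∧ ¬ G.Adj v w ∧ G.Adj v w' ∧ G.Adj w w' := by
  intro u z p
  induction p with
  | nil => intro hz hu _; exact absurd hz hu
  | @cons a x c h _q ih =>
    intro hz ha hna
    by_cases hxv : G.Adj v x
    · exact ⟨a, x, ha, hna, hxv, h⟩
    · by_cases hx : x = v
      · subst hx; exact absurd h.symm hna
      · exact ih hz hx hxv

private lemma le_indepNum {V : Type*} [Fintype V] (G : SimpleGraph V) (s : Set V) (t : Finset V)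
    (hts : ∀ x ∈ t, x ∈ s) (hind : ∀ a ∈ t, ∀ b ∈ t, ¬ G.Adj a b) :
    (#t) ≤ _root_.indepNum (G.induce s) := by
  classical
  show #t ≤ sSup {m | ∃ s' : Set s, (s'.Pairwise fun a b => ¬ (G.induce s).Adj a b) ∧ s'.ncard = m}
  set t' : Finset s := t.subtype (· ∈ s) with ht'
  have hcard : #t' = #t := by
    rw [ht', Finset.card_subtype, Finset.filter_true_of_mem hts]
  apply le_csSup
  · refine ⟨Nat.card s, ?_⟩
    rintro m ⟨s', _, rfl⟩
    calc s'.ncard ≤ (Set.univ : Set s).ncard := Set.ncard_le_ncard (Set.subset_univ _) Set.finite_univ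
      _ = Nat.card s := Set.ncard_univ _
  · refine ⟨(t' : Set s), ?_, by rw [Set.ncard_coe_finset, hcard]⟩
    intro a ha b hb hab hadj
    have hadj' : G.Adj a b := hadj
    exact hind a (Finset.mem_subtype.1 ha) b (Finset.mem_subtype.1 hb) hadj'

/-- if `Δ(G) < n(1 - 1/(24k-12))` then `α'(G) ≥ k - 1`. -/
theorem stmt10 {V : Type*} [Fintype V] (G : SimpleGraph V) (n k : ℕ) (hk : 1 ≤ k)
    (hn : 120 * k ^ 2 + 60 ≤ n + 180 * k) (hcard : Fintype.card V = n) (hconn : G.Connected)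
    (he : (G.edgeSet.ncard : ℚ) ≤ (n : ℚ) * (1 + 1 / (24 * (k : ℚ) - 12)))
    (hΔ : ∀ v : V, ((G.neighborSet v).ncard : ℚ) < (n : ℚ) * (1 - 1 / (24 * (k : ℚ) - 12))) :
    k - 1 ≤ alphaPrime G := by
  classical
  rcases Nat.lt_or_ge k 2 with hk2 | hk2
  · have hk1 : k = 1 := le_antisymm (by omega) hk
    simp [hk1]
  have hn0 : 0 < n := by nlinarith
  have hV : Nonempty V := by
    rw [← Fintype.card_pos_iff, hcard]; exact hn0
  apply le_csInf
  · obtain ⟨v⟩ := hV; exact ⟨_, v, rfl⟩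
  rintro b ⟨v, rfl⟩
  -- setup
  set d := G.degree v with hd
  set sF : Finset V := Finset.univ.filter (fun w => w ≠ v ∧ ¬ G.Adj v w) with hsFdef
  set m := #sF with hm
  set e := #G.edgeFinset with hedef
  -- basic cards
  have hdeg : (G.neighborSet v).ncard = d := by
    rw [Set.ncard_eq_toFinset_card', Set.toFinset_card]
    exact G.card_neighborSet_eq_degree v
  have hecast : G.edgeSet.ncard = e := by
    rw [Set.ncard_eq_toFinset_card', Set.toFinset_card, hedef, SimpleGraph.edgeFinset_card]
  have hsFc : sF = (insert v (G.neighborFinset v))ᶜ := by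
    ext w
    simp [hsFdef, SimpleGraph.mem_neighborFinset, not_or, ne_comm]
  have hKcard : #(insert v (G.neighborFinset v)) = d + 1 := by
    rw [Finset.card_insert_of_notMem (G.notMem_neighborFinset_self v), G.card_neighborFinset_eq_degree]
  have hmn : (d + 1) + m = n := by
    rw [hm, hsFc, ← hKcard, ← hcard]
    exact Finset.card_add_card_compl _
  -- rational facts
  have hc : (0:ℚ) < 24 * (k:ℚ) - 12 := by
    have : (2:ℚ) ≤ (k:ℚ) := by exact_mod_cast hk2
    linarith
  have hΔv := hΔ v
  rw [hdeg] at hΔv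
  have hm1 : (n:ℚ) / (24 * (k:ℚ) - 12) < (m:ℚ) + 1 := by
    have hmQ : (m:ℚ) = (n:ℚ) - (d:ℚ) - 1 := by
      have := hmn; push_cast [← this]; ring
    have hexp : (n:ℚ) * (1 - 1/(24 * (k:ℚ) - 12)) = (n:ℚ) - (n:ℚ)/(24 * (k:ℚ) - 12) := by
      field_simp
    rw [hexp] at hΔv
    linarith
  have hnlow : 5 * ((k:ℚ) - 1) * (24 * (k:ℚ) - 12) ≤ (n:ℚ) := by
    have hnQ : 120 * (k:ℚ)^2 + 60 ≤ (n:ℚ) + 180 * (k:ℚ) := by exact_mod_cast hn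
    nlinarith
  have hm2 : 5 * ((k:ℚ) - 1) ≤ (n:ℚ) / (24 * (k:ℚ) - 12) := by
    rw [le_div_iff₀ hc]; linarith
  have hm5a : 5 * (k - 1) ≤ m := by
    have h5 : ((5 * (k - 1) : ℕ) : ℚ) < ((m + 1 : ℕ) : ℚ) := by
      push_cast [Nat.cast_sub hk]
      linarith
    have h6 : 5 * (k - 1) < m + 1 := by exact_mod_cast h5
    omega
  -- e ≤ n + m
  have he2 : e ≤ n + m := by
    have heQ : (e:ℚ) ≤ (n:ℚ) + (n:ℚ)/(24 * (k:ℚ) - 12) := by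
      have hexp : (n:ℚ) * (1 + 1/(24 * (k:ℚ) - 12)) = (n:ℚ) + (n:ℚ)/(24 * (k:ℚ) - 12) := by
        field_simp
      rw [hecast, hexp] at he
      exact he
    have : (e:ℚ) < ((n + m + 1 : ℕ) : ℚ) := by push_cast; linarith
    have := Nat.cast_lt (α := ℚ) |>.mp this
    omega
  -- sF is nonempty, get crossing edge
  have hm0 : 0 < m := by omega
  obtain ⟨u, hu⟩ := Finset.card_pos.mp hm0
  have huP : u ≠ v ∧ ¬ G.Adj v u := by
    have := hu; rw [hsFdef, Finset.mem_filter] at this; exact this.2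
  obtain ⟨p⟩ := hconn.preconnected u v
  obtain ⟨w, w', hwv, hwnadj, hw'adj, hww'⟩ := cross_aux G v u v p rfl huP.1 huP.2
  have hwin : w ∈ sF := by
    rw [hsFdef, Finset.mem_filter]; exact ⟨Finset.mem_univ _, hwv, hwnadj⟩
  have hw'N : w' ∈ G.neighborFinset v := (SimpleGraph.mem_neighborFinset _ _ _).2 hw'adj
  -- degree sum bound
  have hA : ∑ x ∈ Finset.univ, G.degree x = 2 * e := G.sum_degrees_eq_twice_card_edges
  have hsplit : ∑ x ∈ insert v (G.neighborFinset v), G.degree x + ∑ x ∈ sF, G.degree x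
      = 2 * e := by
    rw [hsFc, Finset.sum_add_sum_compl, hA]
  have hinsert : ∑ x ∈ insert v (G.neighborFinset v), G.degree x
      = d + ∑ x ∈ G.neighborFinset v, G.degree x := by
    rw [Finset.sum_insert (G.notMem_neighborFinset_self v)]
  -- each neighbor has degree ≥ 1, w' has degree ≥ 2
  have hB : d + 1 ≤ ∑ x ∈ G.neighborFinset v, G.degree x := by
    have hw'2 : 2 ≤ G.degree w' := by
      have hsub : {v, w} ⊆ G.neighborFinset w' := by
        intro y hy
        rcases Finset.mem_insert.1 hy with rfl | hy
        · exact (SimpleGraph.mem_neighborFinset _ _ _).2 hw'adj.symm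
        · rw [Finset.mem_singleton] at hy; subst hy
          exact (SimpleGraph.mem_neighborFinset _ _ _).2 hww'.symm
      have : #({v, w} : Finset V) = 2 := Finset.card_pair (Ne.symm hwv)
      rw [← this, ← G.card_neighborFinset_eq_degree]
      exact Finset.card_le_card hsub
    have hrest : ∀ x ∈ (G.neighborFinset v).erase w', 1 ≤ G.degree x := by
      intro x hx
      have hxN := Finset.mem_of_mem_erase hx
      rw [SimpleGraph.mem_neighborFinset] at hxN
      rw [← G.card_neighborFinset_eq_degree]
      exact Finset.card_pos.2 ⟨v, (SimpleGraph.mem_neighborFinset _ _ _).2 hxN.symm⟩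
    have hd1 : 1 ≤ d := by
      rw [hd, ← G.card_neighborFinset_eq_degree]
      exact Finset.card_pos.2 ⟨w', hw'N⟩
    have herase : #((G.neighborFinset v).erase w') = d - 1 := by
      rw [Finset.card_erase_of_mem hw'N, G.card_neighborFinset_eq_degree]
    calc d + 1 = 2 + (d - 1) := by omega
      _ ≤ G.degree w' + ∑ x ∈ (G.neighborFinset v).erase w', G.degree x := by
          apply add_le_add hw'2
          calc d - 1 = ∑ _x ∈ (G.neighborFinset v).erase w', 1 := by
                rw [Finset.sum_const, smul_eq_mul, mul_one, herase]
            _ ≤ _ := Finset.sum_le_sum hrest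
      _ = ∑ x ∈ G.neighborFinset v, G.degree x := by
          exact Finset.add_sum_erase _ (fun x => G.degree x) hw'N
  -- induced degree sum bound
  have hC : (∑ x ∈ sF, #(sF.filter (G.Adj x))) + 1 ≤ ∑ x ∈ sF, G.degree x := by
    have hterm : ∀ x ∈ sF.erase w, #(sF.filter (G.Adj x)) ≤ G.degree x := by
      intro x _
      rw [← G.card_neighborFinset_eq_degree]
      apply Finset.card_le_card
      intro y hy
      rw [Finset.mem_filter] at hy
      exact (SimpleGraph.mem_neighborFinset _ _ _).2 hy.2
    have hw2 : #(sF.filter (G.Adj w)) + 1 ≤ G.degree w := by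
      have hw'notin : w' ∉ sF := by
        rw [hsFdef, Finset.mem_filter]
        push_neg
        intro _ _
        exact hw'adj
      have hsub : sF.filter (G.Adj w) ⊆ (G.neighborFinset w).erase w' := by
        intro y hy
        rw [Finset.mem_filter] at hy
        refine Finset.mem_erase.2 ⟨?_, (SimpleGraph.mem_neighborFinset _ _ _).2 hy.2⟩
        intro hyw'; exact hw'notin (hyw' ▸ hy.1)
      have hwW' : w' ∈ G.neighborFinset w := (SimpleGraph.mem_neighborFinset _ _ _).2 hww'
      have := Finset.card_le_card hsub
      rw [Finset.card_erase_of_mem hwW', G.card_neighborFinset_eq_degree] at this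
      have hdw : 1 ≤ G.degree w := by
        rw [← G.card_neighborFinset_eq_degree]
        exact Finset.card_pos.2 ⟨w', hwW'⟩
      omega
    calc (∑ x ∈ sF, #(sF.filter (G.Adj x))) + 1
        = (#(sF.filter (G.Adj w)) + 1) + ∑ x ∈ sF.erase w, #(sF.filter (G.Adj x)) := by
          rw [← Finset.add_sum_erase _ _ hwin]; ring
      _ ≤ G.degree w + ∑ x ∈ sF.erase w, G.degree x :=
          add_le_add hw2 (Finset.sum_le_sum hterm)
      _ = ∑ x ∈ sF, G.degree x := by
          exact Finset.add_sum_erase _ (fun x => G.degree x) hwin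
  have h3 : (∑ x ∈ sF, #(sF.filter (G.Adj x))) + 2 * d + 2 ≤ 2 * e := by
    omega
  -- Caro-Wei
  obtain ⟨t, hts, hind, hcw⟩ := cw_ratio G sF
  have hdenom : m + ∑ x ∈ sF, #(sF.filter (G.Adj x)) ≤ 5 * m := by omega
  have hkt : k - 1 ≤ #t := by
    have h1 : m ^ 2 ≤ #t * (5 * m) :=
      le_trans hcw (Nat.mul_le_mul_left _ hdenom)
    have h2 : (5 * (k - 1)) * m ≤ (5 * #t) * m := by
      calc (5 * (k - 1)) * m ≤ m * m := Nat.mul_le_mul_right _ hm5a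
        _ ≤ #t * (5 * m) := by rw [← pow_two]; exact h1
        _ = (5 * #t) * m := by ring
    have := Nat.le_of_mul_le_mul_right h2 hm0
    omega
  refine le_trans hkt ?_
  apply le_indepNum G (G.delNbhd v) t
  · intro x hx
    have := Finset.mem_filter.1 (hts hx)
    exact ⟨this.2.1, this.2.2⟩
  · exact hind
end
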